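/- arXiv:2411.06938 — 4 statements merged into one kernel-verified Lean document; each statement's English description precedes it below -/
import Mathlib

section
/- If X is a sequence class that is finitely injective and finitely determined, then X is injective. -/
open Filter Topology NormedSpace
open scoped TensorProduct ENNReal

/-- Truncation of a sequence: keep the first `k` entries, zero afterwards. -/
def trunc {E : Type} [Zero E] (x : ℕ → E) (k : ℕ) : ℕ → E := fun j => if j < k then x j else 0

/-- A sequence class: a rule assigning to every Banach space `E` a Banach space of
`E`-valued sequences containing `c₀₀(E)`, contained in `ℓ∞(E)` with norm-one inclusions,
and such that `‖x · e_j‖ = ‖x‖`.  Membership and the norm are given explicitly. -/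
structure SequenceClass (𝕜 : Type) [RCLike 𝕜] : Type 1 where
  Mem : ∀ (E : Type) [NormedAddCommGroup E] [NormedSpace 𝕜 E] [CompleteSpace E],
    (ℕ → E) → Prop
  Norm : ∀ (E : Type) [NormedAddCommGroup E] [NormedSpace 𝕜 E] [CompleteSpace E],
    (ℕ → E) → ℝ
  mem_zero : ∀ (E : Type) [NormedAddCommGroup E] [NormedSpace 𝕜 E] [CompleteSpace E],
    Mem E 0
  mem_add : ∀ (E : Type) [NormedAddCommGroup E] [NormedSpace 𝕜 E] [CompleteSpace E]
    (x y : ℕ → E), Mem E x → Mem E y → Mem E (x + y)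
  mem_smul : ∀ (E : Type) [NormedAddCommGroup E] [NormedSpace 𝕜 E] [CompleteSpace E]
    (c : 𝕜) (x : ℕ → E), Mem E x → Mem E (c • x)
  norm_nonneg : ∀ (E : Type) [NormedAddCommGroup E] [NormedSpace 𝕜 E] [CompleteSpace E]
    (x : ℕ → E), 0 ≤ Norm E x
  norm_eq_zero : ∀ (E : Type) [NormedAddCommGroup E] [NormedSpace 𝕜 E] [CompleteSpace E]
    (x : ℕ → E), Mem E x → (Norm E x = 0 ↔ x = 0)
  norm_add_le : ∀ (E : Type) [NormedAddCommGroup E] [NormedSpace 𝕜 E] [CompleteSpace E]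
    (x y : ℕ → E), Mem E x → Mem E y → Norm E (x + y) ≤ Norm E x + Norm E y
  norm_smul : ∀ (E : Type) [NormedAddCommGroup E] [NormedSpace 𝕜 E] [CompleteSpace E]
    (c : 𝕜) (x : ℕ → E), Mem E x → Norm E (c • x) = ‖c‖ * Norm E x
  mem_single : ∀ (E : Type) [NormedAddCommGroup E] [NormedSpace 𝕜 E] [CompleteSpace E]
    (j : ℕ) (v : E), Mem E (Pi.single j v)
  coord_norm_le : ∀ (E : Type) [NormedAddCommGroup E] [NormedSpace 𝕜 E] [CompleteSpace E]
    (x : ℕ → E), Mem E x → ∀ j, ‖x j‖ ≤ Norm E x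
  norm_single : ∀ (E : Type) [NormedAddCommGroup E] [NormedSpace 𝕜 E] [CompleteSpace E]
    (j : ℕ) (v : E), Norm E (Pi.single j v) = ‖v‖
  complete : ∀ (E : Type) [NormedAddCommGroup E] [NormedSpace 𝕜 E] [CompleteSpace E]
    (u : ℕ → ℕ → E), (∀ n, Mem E (u n)) →
    (∀ ε : ℝ, 0 < ε → ∃ N, ∀ m ≥ N, ∀ n ≥ N, Norm E (u m - u n) < ε) →
    ∃ x, Mem E x ∧ Filter.Tendsto (fun n => Norm E (u n - x)) Filter.atTop (nhds 0)

variable {𝕜 : Type} [RCLike 𝕜]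

/-- A sequence class is finitely determined if membership and the norm are determined
by the finite truncations. -/
def SequenceClass.FinitelyDetermined (X : SequenceClass 𝕜) : Prop :=
  ∀ (E : Type) [NormedAddCommGroup E] [NormedSpace 𝕜 E] [CompleteSpace E] (x : ℕ → E),
    (X.Mem E x ↔ ∃ C : ℝ, ∀ k, X.Norm E (trunc x k) ≤ C) ∧
    (X.Mem E x → X.Norm E x = ⨆ k, X.Norm E (trunc x k))

/-- A sequence class is injective if membership and norms can be computed after composing
with a metric injection. -/
def SequenceClass.Injective (X : SequenceClass 𝕜) : Prop :=
  ∀ (E F : Type) [NormedAddCommGroup E] [NormedSpace 𝕜 E] [CompleteSpace E]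
    [NormedAddCommGroup F] [NormedSpace 𝕜 F] [CompleteSpace F]
    (i : E →ₗᵢ[𝕜] F) (x : ℕ → E),
    X.Mem F (fun j => i (x j)) →
      X.Mem E x ∧ X.Norm E x ≤ X.Norm F (fun j => i (x j))

/-- A sequence class is finitely injective if the above inequality holds for finitely
supported truncations. -/
def SequenceClass.FinitelyInjective (X : SequenceClass 𝕜) : Prop :=
  ∀ (E F : Type) [NormedAddCommGroup E] [NormedSpace 𝕜 E] [CompleteSpace E]
    [NormedAddCommGroup F] [NormedSpace 𝕜 F] [CompleteSpace F]
    (i : E →ₗᵢ[𝕜] F) (x : ℕ → E) (k : ℕ),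
    X.Norm E (trunc x k) ≤ X.Norm F (trunc (fun j => i (x j)) k)

/-- A sequence class is linearly stable if every bounded operator `T : E → F` induces a
bounded operator between the sequence spaces with norm at most `‖T‖`. -/
def SequenceClass.LinearlyStable (X : SequenceClass 𝕜) : Prop :=
  ∀ (E F : Type) [NormedAddCommGroup E] [NormedSpace 𝕜 E] [CompleteSpace E]
    [NormedAddCommGroup F] [NormedSpace 𝕜 F] [CompleteSpace F]
    (T : E →L[𝕜] F) (x : ℕ → E), X.Mem E x →
    X.Mem F (fun j => T (x j)) ∧
      X.Norm F (fun j => T (x j)) ≤ ‖T‖ * X.Norm E x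

/-- The extension property of a sequence class: sequences of functionals on a subspace
extend coordinatewise to the whole space without increasing the `X`-norm. -/
def SequenceClass.ExtensionProperty (X : SequenceClass 𝕜) : Prop :=
  ∀ (E : Type) [NormedAddCommGroup E] [NormedSpace 𝕜 E] [CompleteSpace E]
    (M : Submodule 𝕜 E) (φ : ℕ → StrongDual 𝕜 M),
    X.Mem (StrongDual 𝕜 M) φ →
    ∃ ψ : ℕ → StrongDual 𝕜 E,
      X.Mem (StrongDual 𝕜 E) ψ ∧
      X.Norm (StrongDual 𝕜 E) ψ ≤ X.Norm (StrongDual 𝕜 M) φ ∧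
      ∀ (j : ℕ) (x : M), ψ j (x : E) = φ j x

/-- `X'` is a dual class for `X`: for every Banach space `E`, the canonical summation
pairing `Ψ((φ_j))((x_j)) = Σ_j φ_j(x_j)` is an isometric isomorphism `X'(E') ≅₁ X(E)'`. -/
def SequenceClass.IsDualClassFor (X' X : SequenceClass 𝕜) : Prop :=
  ∀ (E : Type) [NormedAddCommGroup E] [NormedSpace 𝕜 E] [CompleteSpace E],
    (∀ φ : ℕ → StrongDual 𝕜 E, X'.Mem (StrongDual 𝕜 E) φ →
      ∀ x : ℕ → E, X.Mem E x → Summable (fun j => φ j (x j))) ∧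
    (∀ φ : ℕ → StrongDual 𝕜 E, X'.Mem (StrongDual 𝕜 E) φ →
      X'.Norm (StrongDual 𝕜 E) φ =
        ⨆ x : {x : ℕ → E // X.Mem E x ∧ X.Norm E x ≤ 1}, ‖∑' j, φ j (x.1 j)‖) ∧
    (∀ f : (ℕ → E) → 𝕜,
      (∀ x y, X.Mem E x → X.Mem E y → f (x + y) = f x + f y) →
      (∀ (c : 𝕜) x, X.Mem E x → f (c • x) = c * f x) →
      (∃ C : ℝ, ∀ x, X.Mem E x → ‖f x‖ ≤ C * X.Norm E x) →
      ∃ φ : ℕ → StrongDual 𝕜 E, X'.Mem (StrongDual 𝕜 E) φ ∧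
        ∀ x, X.Mem E x → f x = ∑' j, φ j (x j))

/-- A finitely injective and finitely determined sequence class is injective. -/
theorem finitelyInjective_finitelyDetermined_implies_injective
    (X : SequenceClass 𝕜) (h₁ : X.FinitelyInjective) (h₂ : X.FinitelyDetermined) :
    X.Injective := by
  intro E F _ _ _ _ _ _ i x hmem
  obtain ⟨hF1, hF2⟩ := h₂ F (fun j => i (x j))
  obtain ⟨hE1, hE2⟩ := h₂ E x
  obtain ⟨C, hC⟩ := hF1.mp hmem
  have hle : ∀ k, X.Norm E (trunc x k) ≤ X.Norm F (trunc (fun j => i (x j)) k) :=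
    fun k => h₁ E F i x k
  have hmemE : X.Mem E x := hE1.mpr ⟨C, fun k => (hle k).trans (hC k)⟩
  refine ⟨hmemE, ?_⟩
  rw [hE2 hmemE, hF2 hmem]
  exact ciSup_mono ⟨C, fun r ⟨k, hk⟩ => hk ▸ hC k⟩ hle
end

section
/- For 1 < p < ∞ and any Banach space E, the dual of the space ℓ_p⟨E⟩ of Cohen strongly p-summable sequences is isometrically isomorphic to ℓ_{p*}^w(E'), the weakly p*-summable sequences in E', via the canonical pairing ((φ_j), (x_j)) ↦ Σ_j φ_j(x_j), where 1/p + 1/p* = 1. -/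
open Filter Topology NormedSpace
open scoped TensorProduct ENNReal

/-- Weak `p`-summability for an `E`-valued sequence. -/
def WeaklySummable (𝕜 : Type) [RCLike 𝕜] (p : ℝ)
    {E : Type} [NormedAddCommGroup E] [NormedSpace 𝕜 E] (x : ℕ → E) : Prop :=
  ∀ φ : StrongDual 𝕜 E, Summable (fun j => ‖φ (x j)‖ ^ p)

/-- The weak `ℓ_p` norm `‖(x_j)‖_{w,p} = sup_{φ ∈ B_{E'}} ‖(φ(x_j))_j‖_p`. -/
noncomputable def weakNorm (𝕜 : Type) [RCLike 𝕜] (p : ℝ)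
    {E : Type} [NormedAddCommGroup E] [NormedSpace 𝕜 E] (x : ℕ → E) : ℝ :=
  ⨆ φ : {φ : StrongDual 𝕜 E // ‖φ‖ ≤ 1}, (∑' j, ‖φ.1 (x j)‖ ^ p) ^ (1 / p)

/-- Membership in `ℓ_p^w(E')` for a sequence of functionals, expressed through the unit
ball of `E` (for dual-valued sequences this computes the weak `ℓ_p` norm). -/
def DualWeaklySummable (𝕜 : Type) [RCLike 𝕜] (p : ℝ) {E : Type} [NormedAddCommGroup E] [NormedSpace 𝕜 E]
    (φ : ℕ → StrongDual 𝕜 E) : Prop :=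
  ∃ C : ℝ, ∀ x : E, ‖x‖ ≤ 1 →
    Summable (fun n => ‖φ n x‖ ^ p) ∧ (∑' n, ‖φ n x‖ ^ p) ^ (1 / p) ≤ C

/-- The weak `ℓ_p` norm of a sequence of functionals. -/
noncomputable def dualWeakNorm (𝕜 : Type) [RCLike 𝕜] (p : ℝ) {E : Type} [NormedAddCommGroup E] [NormedSpace 𝕜 E]
    (φ : ℕ → StrongDual 𝕜 E) : ℝ :=
  ⨆ x : {x : E // ‖x‖ ≤ 1}, (∑' n, ‖φ n x.1‖ ^ p) ^ (1 / p)

/-- Membership in `ℓ_p^{mid}(E)`: the mid `p`-summable sequences. -/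
def MidSummable (𝕜 : Type) [RCLike 𝕜] (p : ℝ) {E : Type} [NormedAddCommGroup E] [NormedSpace 𝕜 E]
    (x : ℕ → E) : Prop :=
  ∃ C : ℝ, ∀ φ : ℕ → StrongDual 𝕜 E,
    DualWeaklySummable 𝕜 p φ → dualWeakNorm 𝕜 p φ ≤ 1 →
    (∀ n, Summable fun j => ‖φ n (x j)‖ ^ p) ∧
    Summable (fun n => ∑' j, ‖φ n (x j)‖ ^ p) ∧
    (∑' n, ∑' j, ‖φ n (x j)‖ ^ p) ^ (1 / p) ≤ C

/-- The mid `p`-summing norm `‖(x_j)‖_{p,mid}`. -/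
noncomputable def midNorm (𝕜 : Type) [RCLike 𝕜] (p : ℝ) {E : Type} [NormedAddCommGroup E] [NormedSpace 𝕜 E]
    (x : ℕ → E) : ℝ :=
  ⨆ φ : {φ : ℕ → StrongDual 𝕜 E // DualWeaklySummable 𝕜 p φ ∧ dualWeakNorm 𝕜 p φ ≤ 1},
    (∑' n, ∑' j, ‖φ.1 n (x j)‖ ^ p) ^ (1 / p)

/-- Membership in `ℓ_p⟨E⟩`: the Cohen strongly `p`-summable sequences, where `q = p*`. -/
def CohenSummable (𝕜 : Type) [RCLike 𝕜] (q : ℝ) {E : Type} [NormedAddCommGroup E] [NormedSpace 𝕜 E]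
    (x : ℕ → E) : Prop :=
  ∃ C : ℝ, ∀ φ : ℕ → StrongDual 𝕜 E,
    DualWeaklySummable 𝕜 q φ → dualWeakNorm 𝕜 q φ ≤ 1 →
    Summable (fun j => ‖φ j (x j)‖) ∧ ∑' j, ‖φ j (x j)‖ ≤ C

/-- The Cohen norm on `ℓ_p⟨E⟩`, where `q = p*`. -/
noncomputable def cohenNorm (𝕜 : Type) [RCLike 𝕜] (q : ℝ) {E : Type} [NormedAddCommGroup E] [NormedSpace 𝕜 E]
    (x : ℕ → E) : ℝ :=
  ⨆ φ : {φ : ℕ → StrongDual 𝕜 E // DualWeaklySummable 𝕜 q φ ∧ dualWeakNorm 𝕜 q φ ≤ 1},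
    ∑' j, ‖φ.1 j (x j)‖
section Helpers

variable {𝕜 : Type} [RCLike 𝕜] {E : Type} [NormedAddCommGroup E] [NormedSpace 𝕜 E] {q : ℝ}

private lemma rpow_oneDiv_q (hq0 : q ≠ 0) {a : ℝ} (ha : 0 ≤ a) : (a ^ q) ^ (1 / q) = a := by
  rw [← Real.rpow_mul ha, mul_one_div_cancel hq0, Real.rpow_one]

private lemma oneDiv_q_rpow (hq0 : q ≠ 0) {a : ℝ} (ha : 0 ≤ a) : (a ^ (1 / q)) ^ q = a := by
  rw [← Real.rpow_mul ha, one_div_mul_cancel hq0, Real.rpow_one]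

private instance : Nonempty {x : E // ‖x‖ ≤ 1} := ⟨⟨0, by simp⟩⟩

private lemma dwn_bddAbove {φ : ℕ → StrongDual 𝕜 E} (h : DualWeaklySummable 𝕜 q φ) :
    BddAbove (Set.range fun x : {x : E // ‖x‖ ≤ 1} => (∑' n, ‖φ n x.1‖ ^ q) ^ (1 / q)) := by
  obtain ⟨C, hC⟩ := h
  exact ⟨C, by rintro _ ⟨x, rfl⟩; exact (hC x.1 x.2).2⟩

private lemma le_dwn {φ : ℕ → StrongDual 𝕜 E} (h : DualWeaklySummable 𝕜 q φ) {x : E}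
    (hx : ‖x‖ ≤ 1) : (∑' n, ‖φ n x‖ ^ q) ^ (1 / q) ≤ dualWeakNorm 𝕜 q φ :=
  le_ciSup (dwn_bddAbove h) (⟨x, hx⟩ : {x : E // ‖x‖ ≤ 1})

private lemma dwn_nonneg {φ : ℕ → StrongDual 𝕜 E} (h : DualWeaklySummable 𝕜 q φ) :
    0 ≤ dualWeakNorm 𝕜 q φ := by
  refine le_trans ?_ (le_dwn h (x := 0) (by simp))
  exact Real.rpow_nonneg (tsum_nonneg fun n => Real.rpow_nonneg (norm_nonneg _) q) _

private lemma dws_summable {φ : ℕ → StrongDual 𝕜 E} (h : DualWeaklySummable 𝕜 q φ) {x : E}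
    (hx : ‖x‖ ≤ 1) : Summable fun n => ‖φ n x‖ ^ q := by
  obtain ⟨C, hC⟩ := h; exact (hC x hx).1

private lemma tsum_le_one_of_dwn_le_one (hq0 : 0 < q) {ψ : ℕ → StrongDual 𝕜 E}
    (h1 : DualWeaklySummable 𝕜 q ψ) (h2 : dualWeakNorm 𝕜 q ψ ≤ 1) {v : E} (hv : ‖v‖ ≤ 1) :
    ∑' n, ‖ψ n v‖ ^ q ≤ 1 := by
  have h0 : (0:ℝ) ≤ ∑' n, ‖ψ n v‖ ^ q :=
    tsum_nonneg fun n => Real.rpow_nonneg (norm_nonneg _) q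
  calc ∑' n, ‖ψ n v‖ ^ q = ((∑' n, ‖ψ n v‖ ^ q) ^ (1/q)) ^ q := (oneDiv_q_rpow hq0.ne' h0).symm
    _ ≤ 1 ^ q := Real.rpow_le_rpow (Real.rpow_nonneg h0 _) ((le_dwn h1 hv).trans h2) hq0.le
    _ = 1 := Real.one_rpow q

private lemma dws_summable_apply (hq0 : 0 < q) {φ : ℕ → StrongDual 𝕜 E}
    (h : DualWeaklySummable 𝕜 q φ) (v : E) :
    Summable (fun n => ‖φ n v‖ ^ q) ∧
      (∑' n, ‖φ n v‖ ^ q) ^ (1 / q) ≤ dualWeakNorm 𝕜 q φ * ‖v‖ := by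
  rcases eq_or_ne v 0 with rfl | hv
  · constructor
    · simpa [Real.zero_rpow hq0.ne'] using summable_zero
    · simp [Real.zero_rpow hq0.ne', Real.zero_rpow (inv_ne_zero hq0.ne')]
  · have hv' : 0 < ‖v‖ := norm_pos_iff.mpr hv
    set u : E := ((‖v‖⁻¹ : ℝ) : 𝕜) • v with hu_def
    have hu : ‖u‖ = 1 := by
      rw [hu_def, norm_smul, RCLike.norm_ofReal, abs_of_nonneg (inv_nonneg.mpr hv'.le),
        inv_mul_cancel₀ hv'.ne']
    have hvu : ∀ n, ‖φ n v‖ ^ q = ‖v‖ ^ q * ‖φ n u‖ ^ q := by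
      intro n
      have : φ n v = ((‖v‖ : ℝ) : 𝕜) • φ n u := by
        rw [hu_def, ← map_smul, smul_smul, ← RCLike.ofReal_mul, mul_inv_cancel₀ hv'.ne']
        simp
      rw [this, norm_smul, RCLike.norm_ofReal, abs_of_nonneg hv'.le,
        Real.mul_rpow hv'.le (norm_nonneg _)]
    have hsu : Summable fun n => ‖φ n u‖ ^ q := dws_summable h hu.le
    have hsum : Summable fun n => ‖φ n v‖ ^ q := by
      refine Summable.congr (hsu.mul_left (‖v‖ ^ q)) fun n => (hvu n).symm
    refine ⟨hsum, ?_⟩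
    have h0 : (0:ℝ) ≤ ∑' n, ‖φ n u‖ ^ q :=
      tsum_nonneg fun n => Real.rpow_nonneg (norm_nonneg _) q
    calc (∑' n, ‖φ n v‖ ^ q) ^ (1/q)
        = (‖v‖ ^ q * ∑' n, ‖φ n u‖ ^ q) ^ (1/q) := by rw [tsum_congr hvu, tsum_mul_left]
      _ = ‖v‖ * (∑' n, ‖φ n u‖ ^ q) ^ (1/q) := by
          rw [Real.mul_rpow (Real.rpow_nonneg (norm_nonneg _) _) h0,
            rpow_oneDiv_q hq0.ne' (norm_nonneg v)]
      _ ≤ ‖v‖ * dualWeakNorm 𝕜 q φ := by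
          exact mul_le_mul_of_nonneg_left (le_dwn h hu.le) (norm_nonneg v)
      _ = dualWeakNorm 𝕜 q φ * ‖v‖ := mul_comm _ _

private lemma dws_apply_le (hq0 : 0 < q) {φ : ℕ → StrongDual 𝕜 E}
    (h : DualWeaklySummable 𝕜 q φ) (v : E) (j : ℕ) :
    ‖φ j v‖ ≤ dualWeakNorm 𝕜 q φ * ‖v‖ := by
  obtain ⟨hsum, hle⟩ := dws_summable_apply hq0 h v
  have h1 : ‖φ j v‖ ^ q ≤ ∑' n, ‖φ n v‖ ^ q :=
    hsum.le_tsum j fun n _ => Real.rpow_nonneg (norm_nonneg _) q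
  calc ‖φ j v‖ = (‖φ j v‖ ^ q) ^ (1/q) := (rpow_oneDiv_q hq0.ne' (norm_nonneg _)).symm
    _ ≤ (∑' n, ‖φ n v‖ ^ q) ^ (1/q) :=
        Real.rpow_le_rpow (Real.rpow_nonneg (norm_nonneg _) _) h1 (by positivity)
    _ ≤ _ := hle

private lemma dws_zero (hq0 : 0 < q) :
    DualWeaklySummable 𝕜 q (fun _ => (0 : StrongDual 𝕜 E)) ∧
      dualWeakNorm 𝕜 q (fun _ => (0 : StrongDual 𝕜 E)) ≤ 1 := by
  have key : ∀ x : E, (∑' n : ℕ, ‖(0 : StrongDual 𝕜 E) x‖ ^ q) ^ (1/q) = 0 := by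
    intro x
    simp [Real.zero_rpow hq0.ne', Real.zero_rpow (inv_ne_zero hq0.ne')]
  constructor
  · refine ⟨0, fun x hx => ⟨?_, ?_⟩⟩
    · simpa [Real.zero_rpow hq0.ne'] using summable_zero
    · rw [key]
  · refine ciSup_le fun x => ?_
    rw [key]
    exact zero_le_one

private lemma adm_nonempty (hq0 : 0 < q) :
    Nonempty {ψ : ℕ → StrongDual 𝕜 E //
      DualWeaklySummable 𝕜 q ψ ∧ dualWeakNorm 𝕜 q ψ ≤ 1} :=
  ⟨⟨fun _ => 0, dws_zero hq0⟩⟩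

end Helpers

section Helpers2

variable {𝕜 : Type} [RCLike 𝕜] {E : Type} [NormedAddCommGroup E] [NormedSpace 𝕜 E] {q p : ℝ}

private lemma cohen_bddAbove {x : ℕ → E} (h : CohenSummable 𝕜 q x) :
    BddAbove (Set.range fun ψ : {ψ : ℕ → StrongDual 𝕜 E //
      DualWeaklySummable 𝕜 q ψ ∧ dualWeakNorm 𝕜 q ψ ≤ 1} => ∑' j, ‖ψ.1 j (x j)‖) := by
  obtain ⟨C, hC⟩ := h
  exact ⟨C, by rintro _ ⟨ψ, rfl⟩; exact (hC ψ.1 ψ.2.1 ψ.2.2).2⟩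

private lemma le_cohenNorm {x : ℕ → E} (h : CohenSummable 𝕜 q x)
    {ψ : ℕ → StrongDual 𝕜 E} (h1 : DualWeaklySummable 𝕜 q ψ)
    (h2 : dualWeakNorm 𝕜 q ψ ≤ 1) : ∑' j, ‖ψ j (x j)‖ ≤ cohenNorm 𝕜 q x :=
  le_ciSup (cohen_bddAbove h) (⟨ψ, h1, h2⟩ : {ψ : ℕ → StrongDual 𝕜 E //
      DualWeaklySummable 𝕜 q ψ ∧ dualWeakNorm 𝕜 q ψ ≤ 1})

private lemma cohen_zero : CohenSummable 𝕜 q (0 : ℕ → E) :=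
  ⟨0, fun ψ _ _ => by simp [summable_zero]⟩

private lemma cohenNorm_zero_le (hq0 : 0 < q) : cohenNorm 𝕜 q (0 : ℕ → E) ≤ 1 := by
  haveI := adm_nonempty (𝕜 := 𝕜) (E := E) hq0
  refine ciSup_le fun ψ => ?_
  simp

private lemma cohenNorm_nonneg (hq0 : 0 < q) {x : ℕ → E} (h : CohenSummable 𝕜 q x) :
    0 ≤ cohenNorm 𝕜 q x := by
  refine le_trans ?_ (le_cohenNorm h (dws_zero hq0).1 (dws_zero hq0).2)
  exact tsum_nonneg fun j => norm_nonneg _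

private lemma cohen_add {x y : ℕ → E} (hx : CohenSummable 𝕜 q x) (hy : CohenSummable 𝕜 q y) :
    CohenSummable 𝕜 q (x + y) := by
  obtain ⟨Cx, hCx⟩ := hx
  obtain ⟨Cy, hCy⟩ := hy
  refine ⟨Cx + Cy, fun ψ h1 h2 => ?_⟩
  obtain ⟨hsx, hlx⟩ := hCx ψ h1 h2
  obtain ⟨hsy, hly⟩ := hCy ψ h1 h2
  have hpt : ∀ j, ‖ψ j ((x + y) j)‖ ≤ ‖ψ j (x j)‖ + ‖ψ j (y j)‖ := fun j => by
    rw [Pi.add_apply, map_add]; exact norm_add_le _ _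
  have hs : Summable fun j => ‖ψ j ((x + y) j)‖ :=
    Summable.of_nonneg_of_le (fun j => norm_nonneg _) hpt (hsx.add hsy)
  refine ⟨hs, ?_⟩
  calc ∑' j, ‖ψ j ((x + y) j)‖ ≤ ∑' j, (‖ψ j (x j)‖ + ‖ψ j (y j)‖) :=
        Summable.tsum_le_tsum hpt hs (hsx.add hsy)
    _ = (∑' j, ‖ψ j (x j)‖) + ∑' j, ‖ψ j (y j)‖ := Summable.tsum_add hsx hsy
    _ ≤ Cx + Cy := add_le_add hlx hly

private lemma cohen_neg {x : ℕ → E} (hx : CohenSummable 𝕜 q x) : CohenSummable 𝕜 q (-x) := by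
  obtain ⟨Cx, hCx⟩ := hx
  refine ⟨Cx, fun ψ h1 h2 => ?_⟩
  have hpt : ∀ j, ‖ψ j ((-x) j)‖ = ‖ψ j (x j)‖ := fun j => by
    rw [Pi.neg_apply, map_neg, norm_neg]
  obtain ⟨hsx, hlx⟩ := hCx ψ h1 h2
  refine ⟨hsx.congr fun j => (hpt j).symm, ?_⟩
  rw [tsum_congr hpt]; exact hlx

private lemma cohen_sub {x y : ℕ → E} (hx : CohenSummable 𝕜 q x) (hy : CohenSummable 𝕜 q y) :
    CohenSummable 𝕜 q (x - y) := by
  rw [sub_eq_add_neg]; exact cohen_add hx (cohen_neg hy)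

private lemma cohen_single (hq0 : 0 < q) (j : ℕ) (v : E) :
    CohenSummable 𝕜 q (Pi.single j v) ∧ cohenNorm 𝕜 q (Pi.single j v) ≤ ‖v‖ := by
  classical
  have key : ∀ ψ : ℕ → StrongDual 𝕜 E, DualWeaklySummable 𝕜 q ψ →
      dualWeakNorm 𝕜 q ψ ≤ 1 →
      Summable (fun i => ‖ψ i ((Pi.single j v : ℕ → E) i)‖) ∧
        ∑' i, ‖ψ i ((Pi.single j v : ℕ → E) i)‖ ≤ ‖v‖ := by
    intro ψ h1 h2
    have hfun : (fun i => ‖ψ i ((Pi.single j v : ℕ → E) i)‖) = fun i => if i = j then ‖ψ j v‖ else 0 := by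
      funext i
      rcases eq_or_ne i j with rfl | hij
      · simp
      · simp [Pi.single_eq_of_ne hij, hij]
    have hhs : HasSum (fun i => ‖ψ i ((Pi.single j v : ℕ → E) i)‖) ‖ψ j v‖ := by
      rw [hfun]; exact hasSum_ite_eq j _
    refine ⟨hhs.summable, ?_⟩
    rw [hhs.tsum_eq]
    calc ‖ψ j v‖ ≤ dualWeakNorm 𝕜 q ψ * ‖v‖ := dws_apply_le hq0 h1 v j
      _ ≤ 1 * ‖v‖ := mul_le_mul_of_nonneg_right h2 (norm_nonneg v)
      _ = ‖v‖ := one_mul _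
  refine ⟨⟨‖v‖, key⟩, ?_⟩
  haveI := adm_nonempty (𝕜 := 𝕜) (E := E) hq0
  exact ciSup_le fun ψ => (key ψ.1 ψ.2.1 ψ.2.2).2

private lemma smul_seq (hq0 : 0 < q) {c : ℝ} (hc : 0 ≤ c) (φ : ℕ → StrongDual 𝕜 E) (v : E)
    (hs : Summable fun n => ‖φ n v‖ ^ q) :
    Summable (fun n => ‖(((c : ℝ) : 𝕜) • φ n) v‖ ^ q) ∧
    (∑' n, ‖(((c : ℝ) : 𝕜) • φ n) v‖ ^ q) ^ (1 / q) = c * (∑' n, ‖φ n v‖ ^ q) ^ (1 / q) := by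
  have hpt : ∀ n, ‖(((c : ℝ) : 𝕜) • φ n) v‖ ^ q = c ^ q * ‖φ n v‖ ^ q := by
    intro n
    rw [ContinuousLinearMap.smul_apply, norm_smul, RCLike.norm_ofReal, abs_of_nonneg hc,
      Real.mul_rpow hc (norm_nonneg _)]
  have hsum : Summable fun n => ‖(((c : ℝ) : 𝕜) • φ n) v‖ ^ q :=
    (hs.mul_left (c ^ q)).congr fun n => (hpt n).symm
  refine ⟨hsum, ?_⟩
  have h0 : (0:ℝ) ≤ ∑' n, ‖φ n v‖ ^ q := tsum_nonneg fun n => Real.rpow_nonneg (norm_nonneg _) q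
  rw [tsum_congr hpt, tsum_mul_left, Real.mul_rpow (Real.rpow_nonneg hc _) h0,
    rpow_oneDiv_q hq0.ne' hc]

private lemma sum_le_dwn_mul (hq0 : 0 < q) {φ : ℕ → StrongDual 𝕜 E}
    (hφ : DualWeaklySummable 𝕜 q φ) {x : ℕ → E} (hx : CohenSummable 𝕜 q x) :
    Summable (fun j => ‖φ j (x j)‖) ∧
      ∑' j, ‖φ j (x j)‖ ≤ dualWeakNorm 𝕜 q φ * cohenNorm 𝕜 q x := by
  set D := dualWeakNorm 𝕜 q φ with hD
  have hD0 : 0 ≤ D := dwn_nonneg hφ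
  rcases eq_or_lt_of_le hD0 with hDz | hDpos
  · have hz : ∀ j, ‖φ j (x j)‖ = 0 := by
      intro j
      have := dws_apply_le hq0 hφ (x j) j
      rw [← hD, ← hDz, zero_mul] at this
      exact le_antisymm this (norm_nonneg _)
    constructor
    · exact summable_zero.congr fun j => (hz j).symm
    · rw [tsum_congr hz, tsum_zero]
      rw [← hDz, zero_mul]
  · set ψ : ℕ → StrongDual 𝕜 E := fun n => ((D⁻¹ : ℝ) : 𝕜) • φ n with hψdef
    have hkey : ∀ v : E, ‖v‖ ≤ 1 →
        Summable (fun n => ‖ψ n v‖ ^ q) ∧ (∑' n, ‖ψ n v‖ ^ q) ^ (1/q) ≤ 1 := by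
      intro v hv
      obtain ⟨hs1, hs2⟩ := smul_seq (𝕜 := 𝕜) hq0 (inv_nonneg.mpr hD0) φ v (dws_summable hφ hv)
      refine ⟨hs1, ?_⟩
      rw [hs2]
      calc D⁻¹ * (∑' n, ‖φ n v‖ ^ q) ^ (1/q) ≤ D⁻¹ * D :=
            mul_le_mul_of_nonneg_left (le_dwn hφ hv) (inv_nonneg.mpr hD0)
        _ = 1 := inv_mul_cancel₀ hDpos.ne'
    have hψs : DualWeaklySummable 𝕜 q ψ := ⟨1, fun v hv => (hkey v hv)⟩
    have hψn : dualWeakNorm 𝕜 q ψ ≤ 1 := ciSup_le fun v => (hkey v.1 v.2).2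
    obtain ⟨C, hC⟩ := hx
    obtain ⟨hsum1, _⟩ := hC ψ hψs hψn
    have htle : ∑' j, ‖ψ j (x j)‖ ≤ cohenNorm 𝕜 q x := le_cohenNorm ⟨C, hC⟩ hψs hψn
    have hrel : ∀ j, ‖φ j (x j)‖ = D * ‖ψ j (x j)‖ := by
      intro j
      rw [hψdef]
      simp only [ContinuousLinearMap.smul_apply, norm_smul, RCLike.norm_ofReal,
        abs_of_nonneg (inv_nonneg.mpr hD0)]
      rw [← mul_assoc, mul_inv_cancel₀ hDpos.ne', one_mul]
    constructor
    · exact (hsum1.mul_left D).congr fun j => (hrel j).symm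
    · rw [tsum_congr hrel, tsum_mul_left]
      exact mul_le_mul_of_nonneg_left htle hD0

end Helpers2

section Helpers3

variable {𝕜 : Type} [RCLike 𝕜] {E : Type} [NormedAddCommGroup E] [NormedSpace 𝕜 E] {q p : ℝ}

private lemma conj_identity (hpq : p.HolderConjugate q) : (q - 1) * p = q := by
  have h := hpq.mul_eq_add
  nlinarith [h]

private lemma cohen_of_lp (hpq : p.HolderConjugate q) {b : ℕ → 𝕜} {x : E} (hx : ‖x‖ ≤ 1)
    (hbs : Summable fun j => ‖b j‖ ^ p) (hbn : (∑' j, ‖b j‖ ^ p) ^ (1 / p) ≤ 1) :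
    CohenSummable 𝕜 q (fun j => b j • x) ∧ cohenNorm 𝕜 q (fun j => b j • x) ≤ 1 := by
  have hq0 : 0 < q := hpq.symm.pos
  have key : ∀ ψ : ℕ → StrongDual 𝕜 E, DualWeaklySummable 𝕜 q ψ →
      dualWeakNorm 𝕜 q ψ ≤ 1 →
      Summable (fun j => ‖ψ j (b j • x)‖) ∧ ∑' j, ‖ψ j (b j • x)‖ ≤ 1 := by
    intro ψ h1 h2
    have hpt : ∀ j, ‖ψ j (b j • x)‖ = ‖b j‖ * ‖ψ j x‖ := fun j => by
      rw [map_smul, norm_smul]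
    have hψ : Summable fun j => ‖ψ j x‖ ^ q := dws_summable h1 hx
    obtain ⟨hs, hle⟩ := Real.summable_and_inner_le_Lp_mul_Lq_tsum_of_nonneg
      (f := fun j => ‖b j‖) (g := fun j => ‖ψ j x‖) hpq
      (fun j => norm_nonneg (b j)) (fun j => norm_nonneg _) hbs hψ
    constructor
    · exact hs.congr fun j => (hpt j).symm
    · rw [tsum_congr hpt]
      refine hle.trans ?_
      have h2' : (∑' j, ‖ψ j x‖ ^ q) ^ (1/q) ≤ 1 := (le_dwn h1 hx).trans h2
      have h2'' : (0:ℝ) ≤ (∑' j, ‖ψ j x‖ ^ q) ^ (1/q) :=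
        Real.rpow_nonneg (tsum_nonneg fun j => Real.rpow_nonneg (norm_nonneg _) _) _
      calc (∑' j, ‖b j‖ ^ p) ^ (1/p) * (∑' j, ‖ψ j x‖ ^ q) ^ (1/q) ≤ 1 * 1 :=
            mul_le_mul hbn h2' h2'' zero_le_one
        _ = 1 := one_mul 1
  refine ⟨⟨1, key⟩, ?_⟩
  haveI := adm_nonempty (𝕜 := 𝕜) (E := E) hq0
  exact ciSup_le fun ψ => (key ψ.1 ψ.2.1 ψ.2.2).2

private noncomputable def conjVec (𝕜 : Type) [RCLike 𝕜] (q : ℝ) (c : ℕ → 𝕜) (T : ℝ) : ℕ → 𝕜 :=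
  fun j => (starRingEnd 𝕜) (c j) * ((‖c j‖ ^ (q - 2) * (T ^ (q - 1))⁻¹ : ℝ) : 𝕜)

private lemma conjVec_norm (hq : 1 < q) {T : ℝ} (hT : 0 < T) (c : ℕ → 𝕜) (j : ℕ) :
    ‖conjVec 𝕜 q c T j‖ = ‖c j‖ ^ (q - 1) * (T ^ (q - 1))⁻¹ := by
  have hinv0 : (0:ℝ) ≤ (T ^ (q - 1))⁻¹ := inv_nonneg.mpr (Real.rpow_nonneg hT.le _)
  have h1 : (0:ℝ) ≤ ‖c j‖ ^ (q - 2) * (T ^ (q - 1))⁻¹ :=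
    mul_nonneg (Real.rpow_nonneg (norm_nonneg _) _) hinv0
  rw [conjVec, norm_mul, RCLike.norm_conj, RCLike.norm_ofReal, abs_of_nonneg h1, ← mul_assoc]
  congr 1
  rcases (norm_nonneg (c j)).eq_or_lt with h0 | hpos
  · rw [← h0, Real.zero_rpow (by linarith : q - 1 ≠ 0), zero_mul]
  · nth_rewrite 1 [← Real.rpow_one ‖c j‖]
    rw [← Real.rpow_add hpos, show (1:ℝ) + (q - 2) = q - 1 by ring]

private lemma conjVec_mul (hq : 1 < q) {T : ℝ} (hT : 0 < T) (c : ℕ → 𝕜) (j : ℕ) :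
    conjVec 𝕜 q c T j * c j = ((‖c j‖ ^ q * (T ^ (q - 1))⁻¹ : ℝ) : 𝕜) := by
  rw [conjVec, mul_right_comm, RCLike.conj_mul]
  rw [show ((‖c j‖ : 𝕜)) ^ 2 = ((‖c j‖ ^ (2:ℕ) : ℝ) : 𝕜) by push_cast; ring]
  rw [← RCLike.ofReal_mul]
  congr 1
  rw [← mul_assoc]
  congr 1
  rcases (norm_nonneg (c j)).eq_or_lt with h0 | hpos
  · rw [← h0, Real.zero_rpow (by positivity : q ≠ 0)]
    norm_num
  · rw [← Real.rpow_natCast ‖c j‖ 2, ← Real.rpow_add hpos]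
    norm_num

private lemma conjVec_rpow_p (hpq : p.HolderConjugate q) {T : ℝ} (hT : 0 < T) (c : ℕ → 𝕜)
    (j : ℕ) : ‖conjVec 𝕜 q c T j‖ ^ p = ‖c j‖ ^ q * (T ^ q)⁻¹ := by
  have hq : 1 < q := hpq.symm.lt
  rw [conjVec_norm hq hT, Real.mul_rpow (Real.rpow_nonneg (norm_nonneg _) _)
      (inv_nonneg.mpr (Real.rpow_nonneg hT.le _)),
    Real.inv_rpow (Real.rpow_nonneg hT.le _),
    ← Real.rpow_mul (norm_nonneg _), ← Real.rpow_mul hT.le, conj_identity hpq]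

end Helpers3

section Helpers4

variable {𝕜 : Type} [RCLike 𝕜] {E : Type} [NormedAddCommGroup E] [NormedSpace 𝕜 E] {q p : ℝ}

private lemma attain (hpq : p.HolderConjugate q) {φ : ℕ → StrongDual 𝕜 E}
    (hφ : DualWeaklySummable 𝕜 q φ) {x : E} (hx : ‖x‖ ≤ 1)
    (hTpos : 0 < (∑' n, ‖φ n x‖ ^ q) ^ (1 / q)) :
    ∃ y : ℕ → E, CohenSummable 𝕜 q y ∧ cohenNorm 𝕜 q y ≤ 1 ∧
      ‖∑' j, φ j (y j)‖ = (∑' n, ‖φ n x‖ ^ q) ^ (1 / q) := by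
  have hq : 1 < q := hpq.symm.lt
  have hq0 : 0 < q := hpq.symm.pos
  set T := (∑' n, ‖φ n x‖ ^ q) ^ (1 / q) with hTdef
  have hcs : Summable fun n => ‖φ n x‖ ^ q := dws_summable hφ hx
  have htn : (0:ℝ) ≤ ∑' n, ‖φ n x‖ ^ q :=
    tsum_nonneg fun n => Real.rpow_nonneg (norm_nonneg _) q
  have hsum_eq : ∑' n, ‖φ n x‖ ^ q = T ^ q := by
    rw [hTdef, oneDiv_q_rpow hq0.ne' htn]
  set b : ℕ → 𝕜 := conjVec 𝕜 q (fun n => φ n x) T with hb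
  have hTq : 0 < T ^ q := Real.rpow_pos_of_pos hTpos q
  have hbp : ∀ j, ‖b j‖ ^ p = ‖φ j x‖ ^ q * (T ^ q)⁻¹ := fun j =>
    conjVec_rpow_p hpq hTpos (fun n => φ n x) j
  have hbs : Summable fun j => ‖b j‖ ^ p :=
    (hcs.mul_right _).congr fun j => (hbp j).symm
  have hbn1 : ∑' j, ‖b j‖ ^ p = 1 := by
    rw [tsum_congr hbp, tsum_mul_right, hsum_eq, mul_inv_cancel₀ hTq.ne']
  obtain ⟨hcoh1, hcoh2⟩ := cohen_of_lp hpq hx hbs (le_of_eq (by rw [hbn1, Real.one_rpow]))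
  refine ⟨fun j => b j • x, hcoh1, hcoh2, ?_⟩
  have hterm : ∀ j, φ j (b j • x) = ((‖φ j x‖ ^ q * (T ^ (q - 1))⁻¹ : ℝ) : 𝕜) := by
    intro j
    rw [map_smul, smul_eq_mul]
    exact conjVec_mul hq hTpos (fun n => φ n x) j
  have hrs : Summable fun j => ‖φ j x‖ ^ q * (T ^ (q - 1))⁻¹ := hcs.mul_right _
  have h1 : ∑' j, ((‖φ j x‖ ^ q * (T ^ (q - 1))⁻¹ : ℝ) : 𝕜)
      = ((∑' j, ‖φ j x‖ ^ q * (T ^ (q - 1))⁻¹ : ℝ) : 𝕜) := by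
    rw [← RCLike.ofRealCLM_apply]
    exact (RCLike.ofRealCLM.map_tsum hrs).symm
  have h2 : ∑' j, ‖φ j x‖ ^ q * (T ^ (q - 1))⁻¹ = T := by
    rw [tsum_mul_right, hsum_eq, ← Real.rpow_neg hTpos.le, ← Real.rpow_add hTpos,
      show q + -(q - 1) = 1 by ring, Real.rpow_one]
  rw [tsum_congr hterm, h1, h2, RCLike.norm_ofReal, abs_of_pos hTpos]

private lemma part2_eq (hpq : p.HolderConjugate q) {φ : ℕ → StrongDual 𝕜 E}
    (hφ : DualWeaklySummable 𝕜 q φ) :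
    dualWeakNorm 𝕜 q φ =
      ⨆ x : {x : ℕ → E // CohenSummable 𝕜 q x ∧ cohenNorm 𝕜 q x ≤ 1}, ‖∑' j, φ j (x.1 j)‖ := by
  have hq0 : 0 < q := hpq.symm.pos
  haveI : Nonempty {x : ℕ → E // CohenSummable 𝕜 q x ∧ cohenNorm 𝕜 q x ≤ 1} :=
    ⟨⟨0, cohen_zero, cohenNorm_zero_le hq0⟩⟩
  have hbound : ∀ z : {x : ℕ → E // CohenSummable 𝕜 q x ∧ cohenNorm 𝕜 q x ≤ 1},
      ‖∑' j, φ j (z.1 j)‖ ≤ dualWeakNorm 𝕜 q φ := by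
    rintro ⟨z, hz1, hz2⟩
    obtain ⟨hs, hle⟩ := sum_le_dwn_mul hq0 hφ hz1
    calc ‖∑' j, φ j (z j)‖ ≤ ∑' j, ‖φ j (z j)‖ := norm_tsum_le_tsum_norm hs
      _ ≤ dualWeakNorm 𝕜 q φ * cohenNorm 𝕜 q z := hle
      _ ≤ dualWeakNorm 𝕜 q φ * 1 := mul_le_mul_of_nonneg_left hz2 (dwn_nonneg hφ)
      _ = dualWeakNorm 𝕜 q φ := mul_one _
  have hbdd : BddAbove (Set.range fun z : {x : ℕ → E // CohenSummable 𝕜 q x ∧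
      cohenNorm 𝕜 q x ≤ 1} => ‖∑' j, φ j (z.1 j)‖) :=
    ⟨dualWeakNorm 𝕜 q φ, by rintro _ ⟨z, rfl⟩; exact hbound z⟩
  refine le_antisymm ?_ (ciSup_le hbound)
  refine ciSup_le fun v => ?_
  have hTnn : (0:ℝ) ≤ (∑' n, ‖φ n v.1‖ ^ q) ^ (1 / q) :=
    Real.rpow_nonneg (tsum_nonneg fun n => Real.rpow_nonneg (norm_nonneg _) q) _
  rcases hTnn.eq_or_lt with h0 | hTpos
  · rw [← h0]
    have h00 : (0:ℝ) = ‖∑' j, φ j ((0 : ℕ → E) j)‖ := by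
      simp
    rw [h00]
    exact le_ciSup hbdd (⟨0, cohen_zero, cohenNorm_zero_le hq0⟩ :
      {x : ℕ → E // CohenSummable 𝕜 q x ∧ cohenNorm 𝕜 q x ≤ 1})
  · obtain ⟨y, hy1, hy2, hy3⟩ := attain hpq hφ v.2 hTpos
    rw [← hy3]
    exact le_ciSup hbdd (⟨y, hy1, hy2⟩ :
      {x : ℕ → E // CohenSummable 𝕜 q x ∧ cohenNorm 𝕜 q x ≤ 1})

end Helpers4

section Helpers5

variable {𝕜 : Type} [RCLike 𝕜] {E : Type} [NormedAddCommGroup E] [NormedSpace 𝕜 E] {q p : ℝ}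

private lemma trunc_eq (g : ℕ → E) (N : ℕ) :
    (fun j => if j < N then g j else 0) = ∑ j ∈ Finset.range N, Pi.single j (g j) := by
  classical
  funext i
  rw [Finset.sum_apply]
  have h1 : ∀ j ∈ Finset.range N, (Pi.single j (g j) : ℕ → E) i = if i = j then g j else 0 :=
    fun j _ => Pi.single_apply j (g j) i
  rw [Finset.sum_congr rfl h1, Finset.sum_ite_eq (Finset.range N) i g]
  simp [Finset.mem_range]

private lemma cohen_finsum (hq0 : 0 < q) (g : ℕ → E) (s : Finset ℕ) :
    CohenSummable 𝕜 q (∑ j ∈ s, Pi.single j (g j)) := by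
  classical
  induction s using Finset.cons_induction with
  | empty => rw [Finset.sum_empty]; exact cohen_zero
  | cons a s ha ih =>
    rw [Finset.sum_cons]
    exact cohen_add (cohen_single hq0 a (g a)).1 ih

private lemma f_zero (f : (ℕ → E) → 𝕜)
    (hadd : ∀ x y, CohenSummable 𝕜 q x → CohenSummable 𝕜 q y → f (x + y) = f x + f y) :
    f 0 = 0 := by
  have h := hadd 0 0 cohen_zero cohen_zero
  rw [add_zero] at h
  exact (left_eq_add.mp h)

private lemma f_finsum (f : (ℕ → E) → 𝕜)
    (hadd : ∀ x y, CohenSummable 𝕜 q x → CohenSummable 𝕜 q y → f (x + y) = f x + f y)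
    (hq0 : 0 < q) (g : ℕ → E) (s : Finset ℕ) :
    f (∑ j ∈ s, Pi.single j (g j)) = ∑ j ∈ s, f (Pi.single j (g j)) := by
  classical
  induction s using Finset.cons_induction with
  | empty => rw [Finset.sum_empty, Finset.sum_empty]; exact f_zero f hadd
  | cons a s ha ih =>
    rw [Finset.sum_cons, Finset.sum_cons,
      hadd _ _ (cohen_single hq0 a (g a)).1 (cohen_finsum hq0 g s), ih]

private lemma phi_partial_bound (hpq : p.HolderConjugate q) (f : (ℕ → E) → 𝕜)
    (hadd : ∀ x y, CohenSummable 𝕜 q x → CohenSummable 𝕜 q y → f (x + y) = f x + f y)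
    (hsmul : ∀ (c : 𝕜) x, CohenSummable 𝕜 q x → f (c • x) = c * f x)
    {C : ℝ} (hC0 : 0 ≤ C) (hC : ∀ x, CohenSummable 𝕜 q x → ‖f x‖ ≤ C * cohenNorm 𝕜 q x)
    {v : E} (hv : ‖v‖ ≤ 1) (N : ℕ) :
    ∑ n ∈ Finset.range N, ‖f (Pi.single n v)‖ ^ q ≤ C ^ q := by
  classical
  have hq : 1 < q := hpq.symm.lt
  have hq0 : 0 < q := hpq.symm.pos
  have hp0 : 0 < p := hpq.pos
  set s := ∑ n ∈ Finset.range N, ‖f (Pi.single n v)‖ ^ q with hsdef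
  have hs0 : 0 ≤ s := Finset.sum_nonneg fun n _ => Real.rpow_nonneg (norm_nonneg _) _
  rcases hs0.eq_or_lt with h0 | hspos
  · rw [← h0]; exact Real.rpow_nonneg hC0 q
  · set T := s ^ (1/q) with hTdef
    have hTpos : 0 < T := Real.rpow_pos_of_pos hspos _
    have hTq : T ^ q = s := oneDiv_q_rpow hq0.ne' hs0
    set b : ℕ → 𝕜 := fun n =>
      if n < N then conjVec 𝕜 q (fun m => f (Pi.single m v)) T n else 0 with hbdef
    have hb_out : ∀ n, ¬ n < N → b n = 0 := fun n hn => if_neg hn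
    have hbp : ∀ n ∈ Finset.range N, ‖b n‖ ^ p = ‖f (Pi.single n v)‖ ^ q * (T ^ q)⁻¹ := by
      intro n hn
      rw [hbdef]
      simp only [if_pos (Finset.mem_range.mp hn)]
      exact conjVec_rpow_p hpq hTpos _ n
    have hzero_out : ∀ n ∉ Finset.range N, ‖b n‖ ^ p = 0 := by
      intro n hn
      rw [hb_out n (fun h => hn (Finset.mem_range.mpr h)), norm_zero, Real.zero_rpow hp0.ne']
    have hbs : Summable fun n => ‖b n‖ ^ p := summable_of_ne_finset_zero hzero_out
    have hbtsum : ∑' n, ‖b n‖ ^ p = 1 := by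
      rw [tsum_eq_sum hzero_out, Finset.sum_congr rfl hbp, ← Finset.sum_mul, ← hsdef, ← hTq,
        mul_inv_cancel₀ (by positivity)]
    obtain ⟨hy1, hy2⟩ := cohen_of_lp hpq hv hbs (le_of_eq (by rw [hbtsum, Real.one_rpow]))
    have hyeq : (fun j => b j • v) = ∑ j ∈ Finset.range N, Pi.single j (b j • v) := by
      rw [← trunc_eq (fun j => b j • v) N]
      funext i
      rcases lt_or_ge i N with h | h
      · simp [h]
      · simp [hb_out i (not_lt.mpr h), not_lt.mpr h]
    have hfy : f (fun j => b j • v) = ((T : ℝ) : 𝕜) := by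
      rw [hyeq, f_finsum f hadd hq0]
      have hstep : ∀ j ∈ Finset.range N,
          f (Pi.single j (b j • v)) = ((‖f (Pi.single j v)‖ ^ q * (T ^ (q - 1))⁻¹ : ℝ) : 𝕜) := by
        intro j hj
        rw [Pi.single_smul, hsmul _ _ (cohen_single hq0 j v).1]
        have := conjVec_mul (𝕜 := 𝕜) hq hTpos (fun m => f (Pi.single m v)) j
        rw [hbdef]
        simp only [if_pos (Finset.mem_range.mp hj)]
        exact this
      rw [Finset.sum_congr rfl hstep, ← RCLike.ofReal_sum, ← Finset.sum_mul, ← hsdef, ← hTq]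
      congr 1
      rw [← Real.rpow_neg hTpos.le, ← Real.rpow_add hTpos,
        show q + -(q - 1) = 1 by ring, Real.rpow_one]
    have hTle : T ≤ C := by
      have h1 : ‖f (fun j => b j • v)‖ ≤ C * cohenNorm 𝕜 q (fun j => b j • v) := hC _ hy1
      rw [hfy, RCLike.norm_ofReal, abs_of_pos hTpos] at h1
      calc T ≤ C * cohenNorm 𝕜 q (fun j => b j • v) := h1
        _ ≤ C * 1 := mul_le_mul_of_nonneg_left hy2 hC0
        _ = C := mul_one C
    rw [← hTq]
    exact Real.rpow_le_rpow hTpos.le hTle hq0.le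

private lemma phi_dws (hpq : p.HolderConjugate q) (f : (ℕ → E) → 𝕜)
    (hadd : ∀ x y, CohenSummable 𝕜 q x → CohenSummable 𝕜 q y → f (x + y) = f x + f y)
    (hsmul : ∀ (c : 𝕜) x, CohenSummable 𝕜 q x → f (c • x) = c * f x)
    {C : ℝ} (hC0 : 0 ≤ C) (hC : ∀ x, CohenSummable 𝕜 q x → ‖f x‖ ≤ C * cohenNorm 𝕜 q x)
    {v : E} (hv : ‖v‖ ≤ 1) :
    Summable (fun n => ‖f (Pi.single n v)‖ ^ q) ∧
      (∑' n, ‖f (Pi.single n v)‖ ^ q) ^ (1 / q) ≤ C := by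
  have hq0 : 0 < q := hpq.symm.pos
  have hnn : ∀ n, 0 ≤ ‖f (Pi.single n v)‖ ^ q := fun n => Real.rpow_nonneg (norm_nonneg _) _
  have hbd := phi_partial_bound hpq f hadd hsmul hC0 hC hv
  have hsum : Summable (fun n => ‖f (Pi.single n v)‖ ^ q) := summable_of_sum_range_le hnn hbd
  refine ⟨hsum, ?_⟩
  have hts : ∑' n, ‖f (Pi.single n v)‖ ^ q ≤ C ^ q := Real.tsum_le_of_sum_range_le hnn hbd
  calc (∑' n, ‖f (Pi.single n v)‖ ^ q) ^ (1/q) ≤ (C ^ q) ^ (1/q) :=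
        Real.rpow_le_rpow (tsum_nonneg hnn) hts (by positivity)
    _ = C := rpow_oneDiv_q hq0.ne' hC0

end Helpers5

section Helpers6

variable {𝕜 : Type} [RCLike 𝕜] {E : Type} [NormedAddCommGroup E] [NormedSpace 𝕜 E] {q p : ℝ}

private lemma cohen_trunc (hq0 : 0 < q) (x : ℕ → E) (N : ℕ) :
    CohenSummable 𝕜 q (fun j => if j < N then x j else 0) := by
  rw [trunc_eq]
  exact cohen_finsum hq0 x (Finset.range N)

private lemma cohen_tail (hq0 : 0 < q) {x : ℕ → E} (hx : CohenSummable 𝕜 q x) (N : ℕ) :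
    CohenSummable 𝕜 q (fun j => if j < N then 0 else x j) := by
  have h : (fun j => if j < N then 0 else x j) = x - fun j => if j < N then x j else 0 := by
    funext j
    by_cases h : j < N <;> simp [h]
  rw [h]
  exact cohen_sub hx (cohen_trunc hq0 x N)

private lemma tail_antitone (hq0 : 0 < q) {x : ℕ → E} (hx : CohenSummable 𝕜 q x)
    {N M : ℕ} (hNM : N ≤ M) :
    cohenNorm 𝕜 q (fun j => if j < M then 0 else x j) ≤
      cohenNorm 𝕜 q (fun j => if j < N then 0 else x j) := by
  haveI := adm_nonempty (𝕜 := 𝕜) (E := E) hq0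
  refine ciSup_le fun ψs => ?_
  obtain ⟨ψ, h1, h2⟩ := ψs
  have hsM : Summable (fun j => ‖ψ j (if j < M then 0 else x j)‖) := by
    obtain ⟨C, hC⟩ := cohen_tail hq0 hx M
    exact (hC ψ h1 h2).1
  have hsN : Summable (fun j => ‖ψ j (if j < N then 0 else x j)‖) := by
    obtain ⟨C, hC⟩ := cohen_tail hq0 hx N
    exact (hC ψ h1 h2).1
  have hpt : ∀ j, ‖ψ j (if j < M then 0 else x j)‖ ≤ ‖ψ j (if j < N then 0 else x j)‖ := by
    intro j
    by_cases hM : j < M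
    · simp [hM]
    · have hN : ¬ j < N := fun h => hM (h.trans_le hNM)
      simp [hM, hN]
  exact (Summable.tsum_le_tsum hpt hsM hsN).trans (le_cohenNorm (cohen_tail hq0 hx N) h1 h2)

private lemma tail_small (hpq : p.HolderConjugate q) {x : ℕ → E} (hx : CohenSummable 𝕜 q x)
    {ε : ℝ} (hε : 0 < ε) :
    ∃ N : ℕ, cohenNorm 𝕜 q (fun j => if j < N then 0 else x j) ≤ ε := by
  classical
  have hq : 1 < q := hpq.symm.lt
  have hq0 : 0 < q := hpq.symm.pos
  have hp0 : 0 < p := hpq.pos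
  by_contra hcon
  push_neg at hcon
  have step1 : ∀ N : ℕ, ∃ ψ : ℕ → StrongDual 𝕜 E,
      DualWeaklySummable 𝕜 q ψ ∧ dualWeakNorm 𝕜 q ψ ≤ 1 ∧
        ε < ∑' j, ‖ψ j (if j < N then 0 else x j)‖ := by
    intro N
    haveI := adm_nonempty (𝕜 := 𝕜) (E := E) hq0
    obtain ⟨ψ, hψ⟩ := exists_lt_of_lt_ciSup (hcon N)
    exact ⟨ψ.1, ψ.2.1, ψ.2.2, hψ⟩
  choose Ψ hΨ1 hΨ2 hΨ3 using step1
  have step2 : ∀ n : ℕ, ∃ m : ℕ, n < m ∧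
      ε < ∑ j ∈ Finset.Ico n m, ‖Ψ n j (x j)‖ := by
    intro n
    have hsum : Summable (fun j => ‖Ψ n j (if j < n then 0 else x j)‖) := by
      obtain ⟨C, hC⟩ := cohen_tail hq0 hx n
      exact (hC (Ψ n) (hΨ1 n) (hΨ2 n)).1
    have htend := hsum.hasSum.tendsto_sum_nat
    have hev1 : ∀ᶠ m in Filter.atTop,
        ε < ∑ j ∈ Finset.range m, ‖Ψ n j (if j < n then 0 else x j)‖ :=
      htend.eventually (eventually_gt_nhds (hΨ3 n))
    obtain ⟨m, hm1, hm2⟩ := (hev1.and (Filter.eventually_gt_atTop n)).exists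
    refine ⟨m, hm2, ?_⟩
    have hsplit : ∑ j ∈ Finset.range m, ‖Ψ n j (if j < n then 0 else x j)‖
        = ∑ j ∈ Finset.Ico n m, ‖Ψ n j (x j)‖ := by
      rw [Finset.range_eq_Ico,
        ← Finset.sum_Ico_consecutive _ (Nat.zero_le n) hm2.le]
      have hz : ∑ j ∈ Finset.Ico 0 n, ‖Ψ n j (if j < n then 0 else x j)‖ = 0 :=
        Finset.sum_eq_zero fun j hj => by
          have hjn : j < n := (Finset.mem_Ico.mp hj).2
          simp [hjn]
      rw [hz, zero_add]
      refine Finset.sum_congr rfl fun j hj => ?_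
      have hjn : ¬ j < n := not_lt.mpr (Finset.mem_Ico.mp hj).1
      simp [hjn]
    rw [← hsplit]
    exact hm1
  choose M hM1 hM2 using step2
  obtain ⟨Nf, hNf0, hNfs⟩ : ∃ Nf : ℕ → ℕ, Nf 0 = 0 ∧ ∀ k, Nf (k + 1) = M (Nf k) :=
    ⟨fun k => Nat.rec 0 (fun _ ih => M ih) k, rfl, fun k => rfl⟩
  have hNmono : StrictMono Nf := strictMono_nat_of_lt_succ fun k => by
    rw [hNfs]; exact hM1 (Nf k)
  obtain ⟨Cx, hCx⟩ := hx
  have hCx0 : 0 ≤ Cx := by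
    have h := hCx (fun _ => 0) (dws_zero hq0).1 (dws_zero hq0).2
    simpa using h.2
  obtain ⟨K, hK⟩ := exists_nat_gt ((Cx / ε) ^ p)
  have hKpos : 0 < (K:ℝ) :=
    lt_of_le_of_lt (Real.rpow_nonneg (div_nonneg hCx0 hε.le) p) hK
  have hKp : Cx < (K:ℝ) ^ (1/p) * ε := by
    have h1 : ((Cx / ε) ^ p) ^ (1/p) < (K:ℝ) ^ (1/p) :=
      Real.rpow_lt_rpow (Real.rpow_nonneg (div_nonneg hCx0 hε.le) p) hK (by positivity)
    rw [rpow_oneDiv_q hp0.ne' (div_nonneg hCx0 hε.le)] at h1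
    exact (div_lt_iff₀ hε).mp h1
  set Φ : ℕ → StrongDual 𝕜 E := fun j =>
    ∑ k ∈ Finset.range K, if j ∈ Finset.Ico (Nf k) (Nf (k+1)) then Ψ (Nf k) j else 0 with hΦ
  have hblock : ∀ k, k < K → ∀ j ∈ Finset.Ico (Nf k) (Nf (k+1)), Φ j = Ψ (Nf k) j := by
    intro k hk j hj
    have h0 : ∀ b ∈ Finset.range K, b ≠ k →
        (if j ∈ Finset.Ico (Nf b) (Nf (b+1)) then Ψ (Nf b) j else 0) = 0 := by
      intro b _ hbk
      have hnot : ¬ j ∈ Finset.Ico (Nf b) (Nf (b+1)) := by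
        rcases lt_or_gt_of_ne hbk with h | h
        · have hle : Nf (b+1) ≤ Nf k := hNmono.monotone (Nat.succ_le_of_lt h)
          intro hjb
          have h1 := (Finset.mem_Ico.mp hjb).2
          have h2 := (Finset.mem_Ico.mp hj).1
          omega
        · have hle : Nf (k+1) ≤ Nf b := hNmono.monotone (Nat.succ_le_of_lt h)
          intro hjb
          have h1 := (Finset.mem_Ico.mp hjb).1
          have h2 := (Finset.mem_Ico.mp hj).2
          omega
      exact if_neg hnot
    simp only [hΦ]
    rw [Finset.sum_eq_single_of_mem k (Finset.mem_range.mpr hk) h0, if_pos hj]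
  have hΦ0 : ∀ j, Nf K ≤ j → Φ j = 0 := by
    intro j hj
    simp only [hΦ]
    refine Finset.sum_eq_zero fun k hk => if_neg fun hjk => ?_
    have h1 : Nf (k+1) ≤ Nf K := hNmono.monotone (Finset.mem_range.mp hk)
    have h2 := (Finset.mem_Ico.mp hjk).2
    omega
  have decomp : ∀ (g : ℕ → ℝ) (n : ℕ),
      ∑ j ∈ Finset.range (Nf n), g j
        = ∑ k ∈ Finset.range n, ∑ j ∈ Finset.Ico (Nf k) (Nf (k+1)), g j := by
    intro g n
    induction n with
    | zero => simp [hNf0]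
    | succ n ih =>
      rw [Finset.sum_range_succ, ← ih, Finset.range_eq_Ico, Finset.range_eq_Ico]
      exact (Finset.sum_Ico_consecutive g (Nat.zero_le (Nf n))
        (hNmono.monotone n.le_succ)).symm
  have hΦkey : ∀ v : E, ‖v‖ ≤ 1 →
      Summable (fun j => ‖Φ j v‖ ^ q) ∧ ∑' j, ‖Φ j v‖ ^ q ≤ (K:ℝ) := by
    intro v hv
    have hzero : ∀ j ∉ Finset.range (Nf K), ‖Φ j v‖ ^ q = 0 := by
      intro j hj
      have hj' : Nf K ≤ j := le_of_not_gt fun h => hj (Finset.mem_range.mpr h)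
      rw [hΦ0 j hj']
      simp [Real.zero_rpow hq0.ne']
    refine ⟨summable_of_ne_finset_zero hzero, ?_⟩
    rw [tsum_eq_sum hzero, decomp _ K]
    have hbk : ∀ k ∈ Finset.range K,
        ∑ j ∈ Finset.Ico (Nf k) (Nf (k+1)), ‖Φ j v‖ ^ q ≤ 1 := by
      intro k hk
      have h1 : ∀ j ∈ Finset.Ico (Nf k) (Nf (k+1)), ‖Φ j v‖ ^ q = ‖Ψ (Nf k) j v‖ ^ q :=
        fun j hj => by rw [hblock k (Finset.mem_range.mp hk) j hj]
      rw [Finset.sum_congr rfl h1]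
      have h2 : ∑ j ∈ Finset.Ico (Nf k) (Nf (k+1)), ‖Ψ (Nf k) j v‖ ^ q
          ≤ ∑' j, ‖Ψ (Nf k) j v‖ ^ q :=
        Summable.sum_le_tsum _ (fun j _ => Real.rpow_nonneg (norm_nonneg _) _)
          (dws_summable (hΨ1 _) hv)
      exact h2.trans (tsum_le_one_of_dwn_le_one hq0 (hΨ1 _) (hΨ2 _) hv)
    calc ∑ k ∈ Finset.range K, ∑ j ∈ Finset.Ico (Nf k) (Nf (k+1)), ‖Φ j v‖ ^ q
        ≤ ∑ k ∈ Finset.range K, 1 := Finset.sum_le_sum hbk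
      _ = (K:ℝ) := by simp
  set cK := (K:ℝ) ^ (1/q) with hcK
  have hcKpos : 0 < cK := Real.rpow_pos_of_pos hKpos _
  set Φ' : ℕ → StrongDual 𝕜 E := fun j => ((cK⁻¹ : ℝ) : 𝕜) • Φ j with hΦ'
  have hΦ'key : ∀ v : E, ‖v‖ ≤ 1 →
      Summable (fun n => ‖Φ' n v‖ ^ q) ∧ (∑' n, ‖Φ' n v‖ ^ q) ^ (1/q) ≤ 1 := by
    intro v hv
    obtain ⟨hs1, hs2⟩ := smul_seq hq0 (inv_nonneg.mpr hcKpos.le) Φ v (hΦkey v hv).1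
    simp only [hΦ']
    refine ⟨hs1, ?_⟩
    rw [hs2]
    calc cK⁻¹ * (∑' n, ‖Φ n v‖ ^ q) ^ (1/q) ≤ cK⁻¹ * cK := by
          refine mul_le_mul_of_nonneg_left ?_ (inv_nonneg.mpr hcKpos.le)
          rw [hcK]
          exact Real.rpow_le_rpow (tsum_nonneg fun n => Real.rpow_nonneg (norm_nonneg _) _)
            (hΦkey v hv).2 (by positivity)
      _ = 1 := inv_mul_cancel₀ hcKpos.ne'
  have hΦ's : DualWeaklySummable 𝕜 q Φ' := ⟨1, fun v hv => hΦ'key v hv⟩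
  have hΦ'n : dualWeakNorm 𝕜 q Φ' ≤ 1 := ciSup_le fun v => (hΦ'key v.1 v.2).2
  have hxzero : ∀ j ∉ Finset.range (Nf K), ‖Φ j (x j)‖ = 0 := by
    intro j hj
    have hj' : Nf K ≤ j := le_of_not_gt fun h => hj (Finset.mem_range.mpr h)
    rw [hΦ0 j hj']
    simp
  have hlow : (K:ℝ) * ε ≤ ∑' j, ‖Φ j (x j)‖ := by
    rw [tsum_eq_sum hxzero, decomp _ K]
    have hbk : ∀ k ∈ Finset.range K,
        ε ≤ ∑ j ∈ Finset.Ico (Nf k) (Nf (k+1)), ‖Φ j (x j)‖ := by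
      intro k hk
      have h1 : ∀ j ∈ Finset.Ico (Nf k) (Nf (k+1)), ‖Φ j (x j)‖ = ‖Ψ (Nf k) j (x j)‖ :=
        fun j hj => by rw [hblock k (Finset.mem_range.mp hk) j hj]
      rw [Finset.sum_congr rfl h1]
      have h2 := hM2 (Nf k)
      rw [← hNfs k] at h2
      exact h2.le
    calc (K:ℝ) * ε = ∑ _k ∈ Finset.range K, ε := by
          simp [Finset.sum_const, Finset.card_range, nsmul_eq_mul]
      _ ≤ _ := Finset.sum_le_sum hbk
  obtain ⟨hs', hle'⟩ := hCx Φ' hΦ's hΦ'n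
  have hrel : ∀ j, ‖Φ' j (x j)‖ = cK⁻¹ * ‖Φ j (x j)‖ := fun j => by
    simp only [hΦ', ContinuousLinearMap.smul_apply, norm_smul, RCLike.norm_ofReal,
      abs_of_nonneg (inv_nonneg.mpr hcKpos.le)]
  have h1 : ∑' j, ‖Φ' j (x j)‖ = cK⁻¹ * ∑' j, ‖Φ j (x j)‖ := by
    rw [tsum_congr hrel, tsum_mul_left]
  have h2 : cK⁻¹ * ((K:ℝ) * ε) ≤ Cx := by
    calc cK⁻¹ * ((K:ℝ) * ε) ≤ cK⁻¹ * ∑' j, ‖Φ j (x j)‖ :=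
          mul_le_mul_of_nonneg_left hlow (inv_nonneg.mpr hcKpos.le)
      _ = ∑' j, ‖Φ' j (x j)‖ := h1.symm
      _ ≤ Cx := hle'
  have h4 : (K:ℝ) ^ (1/p) * cK = (K:ℝ) := by
    rw [hcK, ← Real.rpow_add hKpos,
      show 1/p + 1/q = 1 by rw [one_div, one_div]; exact hpq.inv_add_inv_eq_one, Real.rpow_one]
  have h3 : cK⁻¹ * (K:ℝ) = (K:ℝ) ^ (1/p) := by
    calc cK⁻¹ * (K:ℝ) = cK⁻¹ * ((K:ℝ) ^ (1/p) * cK) := by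
          conv_lhs => rw [← h4]
      _ = (cK⁻¹ * cK) * (K:ℝ) ^ (1/p) := by ring
      _ = (K:ℝ) ^ (1/p) := by rw [inv_mul_cancel₀ hcKpos.ne', one_mul]
  rw [← mul_assoc, h3] at h2
  exact absurd h2 (not_le.mpr hKp)

end Helpers6

/-- For `1 < p < ∞`, the dual of `ℓ_p⟨E⟩` is isometrically isomorphic to
`ℓ_{p*}^w(E')` via the canonical pairing `((φ_j),(x_j)) ↦ Σ_j φ_j(x_j)`:
the pairing converges, is isometric, and every bounded linear functional on `ℓ_p⟨E⟩`
arises this way. -/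
theorem cohen_dual_eq_weak
    (𝕜 : Type) [RCLike 𝕜] (p q : ℝ) (hp : 1 < p) (hpq : 1 / p + 1 / q = 1)
    (E : Type) [NormedAddCommGroup E] [NormedSpace 𝕜 E] [CompleteSpace E] :
    (∀ φ : ℕ → StrongDual 𝕜 E, DualWeaklySummable 𝕜 q φ →
      ∀ x : ℕ → E, CohenSummable 𝕜 q x → Summable (fun j => ‖φ j (x j)‖)) ∧
    (∀ φ : ℕ → StrongDual 𝕜 E, DualWeaklySummable 𝕜 q φ →
      dualWeakNorm 𝕜 q φ =
        ⨆ x : {x : ℕ → E // CohenSummable 𝕜 q x ∧ cohenNorm 𝕜 q x ≤ 1},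
          ‖∑' j, φ j (x.1 j)‖) ∧
    (∀ f : (ℕ → E) → 𝕜,
      (∀ x y, CohenSummable 𝕜 q x → CohenSummable 𝕜 q y → f (x + y) = f x + f y) →
      (∀ (c : 𝕜) x, CohenSummable 𝕜 q x → f (c • x) = c * f x) →
      (∃ C : ℝ, ∀ x, CohenSummable 𝕜 q x → ‖f x‖ ≤ C * cohenNorm 𝕜 q x) →
      ∃ φ : ℕ → StrongDual 𝕜 E, DualWeaklySummable 𝕜 q φ ∧
        ∀ x, CohenSummable 𝕜 q x → f x = ∑' j, φ j (x j)) := by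
  classical
  have hpq' : p.HolderConjugate q := Real.holderConjugate_iff.mpr ⟨hp, by rw [← one_div, ← one_div]; exact hpq⟩
  have hq0 : 0 < q := hpq'.symm.pos
  refine ⟨?_, ?_, ?_⟩
  · intro φ hφ x hx
    exact (sum_le_dwn_mul hq0 hφ hx).1
  · intro φ hφ
    exact part2_eq hpq' hφ
  · intro f hadd hsmul hbound
    obtain ⟨C0, hC0⟩ := hbound
    set C := max C0 0 with hC
    have hCnn : 0 ≤ C := le_max_right _ _
    have hCb : ∀ x, CohenSummable 𝕜 q x → ‖f x‖ ≤ C * cohenNorm 𝕜 q x := fun x hx =>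
      (hC0 x hx).trans (mul_le_mul_of_nonneg_right (le_max_left _ _) (cohenNorm_nonneg hq0 hx))
    have hb : ∀ (j : ℕ) (v : E), ‖f (Pi.single j v)‖ ≤ C * ‖v‖ := by
      intro j v
      calc ‖f (Pi.single j v)‖ ≤ C * cohenNorm 𝕜 q (Pi.single j v) :=
            hCb _ (cohen_single hq0 j v).1
        _ ≤ C * ‖v‖ := mul_le_mul_of_nonneg_left (cohen_single hq0 j v).2 hCnn
    let φ : ℕ → StrongDual 𝕜 E := fun j =>
      LinearMap.mkContinuous
        { toFun := fun v => f (Pi.single j v)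
          map_add' := fun v w => by
            show f (Pi.single j (v + w)) = f (Pi.single j v) + f (Pi.single j w)
            rw [Pi.single_add, hadd _ _ (cohen_single hq0 j v).1 (cohen_single hq0 j w).1]
          map_smul' := fun c v => by
            simp only [RingHom.id_apply, smul_eq_mul]
            show f (Pi.single j (c • v)) = c * f (Pi.single j v)
            rw [Pi.single_smul, hsmul c _ (cohen_single hq0 j v).1] }
        C (hb j)
    have hap : ∀ (j : ℕ) (v : E), φ j v = f (Pi.single j v) := fun j v => rfl
    have hφw : DualWeaklySummable 𝕜 q φ := by
      refine ⟨C, fun v hv => ?_⟩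
      have h := phi_dws hpq' f hadd hsmul hCnn hCb hv
      have heq : ∀ n, ‖φ n v‖ ^ q = ‖f (Pi.single n v)‖ ^ q := fun n => by rw [hap]
      constructor
      · exact h.1.congr fun n => (heq n).symm
      · rw [tsum_congr heq]
        exact h.2
    refine ⟨φ, hφw, ?_⟩
    intro x hx
    have hsum𝕜 : Summable (fun j => φ j (x j)) :=
      Summable.of_norm (sum_le_dwn_mul hq0 hφw hx).1
    have hdecomp : ∀ N : ℕ, f x =
        (∑ j ∈ Finset.range N, φ j (x j)) + f (fun j => if j < N then 0 else x j) := by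
      intro N
      have hxsplit : x = (fun j => if j < N then x j else 0)
          + fun j => if j < N then 0 else x j := by
        funext j
        by_cases h : j < N <;> simp [h]
      have h1 : f x = f (fun j => if j < N then x j else 0)
          + f (fun j => if j < N then 0 else x j) := by
        conv_lhs => rw [hxsplit]
        exact hadd _ _ (cohen_trunc hq0 x N) (cohen_tail hq0 hx N)
      rw [h1]
      congr 1
      rw [trunc_eq, f_finsum f hadd hq0]
      exact Finset.sum_congr rfl fun j _ => (hap j (x j)).symm
    have hkey : ∀ ε : ℝ, 0 < ε → ‖f x - ∑' j, φ j (x j)‖ ≤ ε := by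
      intro ε hε
      obtain ⟨N₀, hN₀⟩ := tail_small hpq' hx
        (show (0:ℝ) < ε / (2 * (C + 1)) by positivity)
      have htends := hsum𝕜.hasSum.tendsto_sum_nat
      have hev : ∀ᶠ N in Filter.atTop,
          ‖(∑ j ∈ Finset.range N, φ j (x j)) - ∑' j, φ j (x j)‖ < ε / 2 := by
        obtain ⟨N₁, hN₁⟩ := Metric.tendsto_atTop.mp htends (ε/2) (by positivity)
        refine Filter.eventually_atTop.mpr ⟨N₁, fun N hN => ?_⟩
        have h := hN₁ N hN
        rwa [dist_eq_norm] at h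
      obtain ⟨N, hN1, hN2⟩ := (hev.and (Filter.eventually_ge_atTop N₀)).exists
      have htail : ‖f (fun j => if j < N then 0 else x j)‖ ≤ ε / 2 := by
        calc ‖f (fun j => if j < N then 0 else x j)‖
            ≤ C * cohenNorm 𝕜 q (fun j => if j < N then 0 else x j) :=
              hCb _ (cohen_tail hq0 hx N)
          _ ≤ C * (ε / (2 * (C + 1))) :=
              mul_le_mul_of_nonneg_left ((tail_antitone hq0 hx hN2).trans hN₀) hCnn
          _ ≤ ε / 2 := by
              rw [← mul_div_assoc, div_le_div_iff₀ (by positivity) (by positivity)]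
              nlinarith [hε.le, hCnn]
      have hrw : f x - ∑' j, φ j (x j) = f (fun j => if j < N then 0 else x j)
          + ((∑ j ∈ Finset.range N, φ j (x j)) - ∑' j, φ j (x j)) := by
        rw [hdecomp N]; ring
      calc ‖f x - ∑' j, φ j (x j)‖
          ≤ ‖f (fun j => if j < N then 0 else x j)‖
            + ‖(∑ j ∈ Finset.range N, φ j (x j)) - ∑' j, φ j (x j)‖ := by
            rw [hrw]; exact norm_add_le _ _
        _ ≤ ε / 2 + ε / 2 := add_le_add htail hN1.le
        _ = ε := by ring
    have h0 : ‖f x - ∑' j, φ j (x j)‖ ≤ 0 :=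
      le_of_forall_pos_le_add fun ε hε => by simpa using hkey ε hε
    have h1 := le_antisymm h0 (norm_nonneg _)
    rwa [norm_eq_zero, sub_eq_zero] at h1
end

section
/- For a Banach space E, 1 ≤ p < ∞, and (a_k) ∈ ℓ_p, x ∈ E, the sequence (a_k x)_{k=1}^∞ is mid p-summable with ‖(a_k x)_k‖_{p,mid} = ‖(a_k)‖_p · ‖x‖, and moreover ‖(a_k x)_{k=n}^∞‖_{p,mid} → 0 as n → ∞, so (a_k x)_k ∈ (ℓ_p^{mid})^u(E). -/
open Filter Topology NormedSpace
open scoped TensorProduct ENNReal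

section Aux


variable (𝕜 : Type) [RCLike 𝕜] {E : Type} [NormedAddCommGroup E] [NormedSpace 𝕜 E]

lemma zero_good' {p : ℝ} (hp : 1 ≤ p) :
    DualWeaklySummable 𝕜 p (fun _ : ℕ => (0 : StrongDual 𝕜 E)) ∧
    dualWeakNorm 𝕜 p (fun _ : ℕ => (0 : StrongDual 𝕜 E)) ≤ 1 := by
  have hpne : p ≠ 0 := by linarith
  have hinvne : p⁻¹ ≠ 0 := inv_ne_zero hpne
  haveI : Nonempty {x : E // ‖x‖ ≤ 1} := ⟨⟨0, by simp⟩⟩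
  have hval : ∀ x : E, (∑' n : ℕ, ‖(0 : StrongDual 𝕜 E) x‖ ^ p) ^ (1 / p) = 0 := by
    intro x
    simp [Real.zero_rpow hpne, Real.zero_rpow hinvne]
  constructor
  · exact ⟨0, fun x hx => ⟨by simpa [Real.zero_rpow hpne] using summable_zero, le_of_eq (hval x)⟩⟩
  · refine ciSup_le (fun x => ?_)
    rw [hval]; norm_num

lemma dws_sum_le' {p : ℝ} (hp : 1 ≤ p) (φ : ℕ → StrongDual 𝕜 E)
    (h1 : DualWeaklySummable 𝕜 p φ) (h2 : dualWeakNorm 𝕜 p φ ≤ 1) (x : E) :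
    Summable (fun n => ‖φ n x‖ ^ p) ∧ ∑' n, ‖φ n x‖ ^ p ≤ ‖x‖ ^ p := by
  have hpne : p ≠ 0 := by linarith
  rcases eq_or_ne x 0 with rfl | hx
  · constructor
    · simpa [Real.zero_rpow hpne] using summable_zero
    · simp [Real.zero_rpow hpne]
  · obtain ⟨C, hC⟩ := h1
    set c : 𝕜 := (‖x‖ : 𝕜) with hc
    have hcne : c ≠ 0 := by
      simp [hc, RCLike.ofReal_eq_zero, norm_eq_zero, hx]
    set y : E := c⁻¹ • x with hy
    have hny : ‖y‖ = 1 := by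
      rw [hy, norm_smul, norm_inv, hc]
      rw [RCLike.norm_ofReal, abs_of_nonneg (norm_nonneg x)]
      exact inv_mul_cancel₀ (norm_ne_zero_iff.2 hx)
    have hxy : ∀ n, ‖φ n x‖ = ‖x‖ * ‖φ n y‖ := by
      intro n
      have hce : x = c • y := by
        rw [hy, smul_smul, mul_inv_cancel₀ hcne, one_smul]
      conv_lhs => rw [hce]
      rw [map_smul, norm_smul, hc, RCLike.norm_ofReal, abs_of_nonneg (norm_nonneg x)]
    have hrw : ∀ n, ‖φ n x‖ ^ p = ‖x‖ ^ p * ‖φ n y‖ ^ p := by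
      intro n
      rw [hxy n, Real.mul_rpow (norm_nonneg x) (norm_nonneg _)]
    obtain ⟨hsum, _⟩ := hC y hny.le
    have hbdd : BddAbove (Set.range fun z : {z : E // ‖z‖ ≤ 1} =>
        (∑' n, ‖φ n z.1‖ ^ p) ^ (1 / p)) := by
      refine ⟨C, ?_⟩
      rintro r ⟨z, rfl⟩
      exact (hC z.1 z.2).2
    have hle1 : (∑' n, ‖φ n y‖ ^ p) ^ (1 / p) ≤ 1 :=
      le_trans (le_ciSup hbdd (⟨y, hny.le⟩ : {z : E // ‖z‖ ≤ 1})) h2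
    have hsumy : ∑' n, ‖φ n y‖ ^ p ≤ 1 := by
      have ht0 : 0 ≤ ∑' n, ‖φ n y‖ ^ p :=
        tsum_nonneg fun n => Real.rpow_nonneg (norm_nonneg _) p
      have := Real.rpow_le_one (Real.rpow_nonneg ht0 _) hle1 (by linarith : (0:ℝ) ≤ p)
      rwa [← Real.rpow_mul ht0, one_div, inv_mul_cancel₀ hpne, Real.rpow_one] at this
    constructor
    · exact Summable.congr (hsum.mul_left (‖x‖ ^ p)) (fun n => (hrw n).symm)
    · calc ∑' n, ‖φ n x‖ ^ p = ‖x‖ ^ p * ∑' n, ‖φ n y‖ ^ p := by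
            rw [← tsum_mul_left]; exact tsum_congr hrw
        _ ≤ ‖x‖ ^ p * 1 :=
            mul_le_mul_of_nonneg_left hsumy (Real.rpow_nonneg (norm_nonneg x) p)
        _ = ‖x‖ ^ p := mul_one _

/-- Per-φ estimate: the three conjuncts of `MidSummable` with the optimal constant. -/
lemma perPhi' {p : ℝ} (hp : 1 ≤ p) (a : ℕ → 𝕜) (ha : Summable fun k => ‖a k‖ ^ p) (x : E)
    (φ : ℕ → StrongDual 𝕜 E)
    (h1 : DualWeaklySummable 𝕜 p φ) (h2 : dualWeakNorm 𝕜 p φ ≤ 1) :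
    (∀ n, Summable fun j => ‖φ n (a j • x)‖ ^ p) ∧
    (Summable fun n => ∑' j, ‖φ n (a j • x)‖ ^ p) ∧
    (∑' n, ∑' j, ‖φ n (a j • x)‖ ^ p) ^ (1 / p) ≤
      (∑' k, ‖a k‖ ^ p) ^ (1 / p) * ‖x‖ := by
  have hpne : p ≠ 0 := by linarith
  have hp0 : (0:ℝ) ≤ p := by linarith
  set A : ℝ := ∑' k, ‖a k‖ ^ p with hA
  have hA0 : 0 ≤ A := tsum_nonneg fun k => Real.rpow_nonneg (norm_nonneg _) p
  have hterm : ∀ n j, ‖φ n (a j • x)‖ ^ p = ‖a j‖ ^ p * ‖φ n x‖ ^ p := by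
    intro n j
    rw [map_smul, norm_smul, Real.mul_rpow (norm_nonneg _) (norm_nonneg _)]
  have hsumj : ∀ n, Summable fun j => ‖φ n (a j • x)‖ ^ p := by
    intro n
    exact Summable.congr (ha.mul_right (‖φ n x‖ ^ p)) (fun j => (hterm n j).symm)
  have hinner : ∀ n, ∑' j, ‖φ n (a j • x)‖ ^ p = A * ‖φ n x‖ ^ p := by
    intro n
    rw [hA, ← tsum_mul_right]
    exact tsum_congr (hterm n)
  obtain ⟨hsn, hsb⟩ := dws_sum_le' 𝕜 hp φ h1 h2 x
  refine ⟨hsumj, ?_, ?_⟩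
  · exact Summable.congr (hsn.mul_left A) (fun n => (hinner n).symm)
  · have houter : ∑' n, ∑' j, ‖φ n (a j • x)‖ ^ p = A * ∑' n, ‖φ n x‖ ^ p := by
      rw [← tsum_mul_left]; exact tsum_congr hinner
    have hle : ∑' n, ∑' j, ‖φ n (a j • x)‖ ^ p ≤ A * ‖x‖ ^ p := by
      rw [houter]; exact mul_le_mul_of_nonneg_left hsb hA0
    have h0 : 0 ≤ ∑' n, ∑' j, ‖φ n (a j • x)‖ ^ p :=
      tsum_nonneg fun n => tsum_nonneg fun j => Real.rpow_nonneg (norm_nonneg _) p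
    calc (∑' n, ∑' j, ‖φ n (a j • x)‖ ^ p) ^ (1 / p)
        ≤ (A * ‖x‖ ^ p) ^ (1 / p) := Real.rpow_le_rpow h0 hle (by positivity)
      _ = A ^ (1 / p) * ‖x‖ := by
          rw [Real.mul_rpow hA0 (Real.rpow_nonneg (norm_nonneg x) p),
            ← Real.rpow_mul (norm_nonneg x), mul_one_div, div_self hpne, Real.rpow_one]

/-- The main equality lemma. -/
lemma mid_eq' {p : ℝ} (hp : 1 ≤ p) (a : ℕ → 𝕜)
    (ha : Summable fun k => ‖a k‖ ^ p) (x : E) :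
    MidSummable 𝕜 p (fun k => a k • x) ∧
    midNorm 𝕜 p (fun k => a k • x) = (∑' k, ‖a k‖ ^ p) ^ (1 / p) * ‖x‖ := by
  have hpne : p ≠ 0 := by linarith
  have hp0 : (0:ℝ) ≤ p := by linarith
  have hinvne : (1/p) ≠ 0 := by positivity
  set A : ℝ := ∑' k, ‖a k‖ ^ p with hA
  have hA0 : 0 ≤ A := tsum_nonneg fun k => Real.rpow_nonneg (norm_nonneg _) p
  haveI hne : Nonempty {φ : ℕ → StrongDual 𝕜 E //
      DualWeaklySummable 𝕜 p φ ∧ dualWeakNorm 𝕜 p φ ≤ 1} :=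
    ⟨⟨fun _ => 0, zero_good' 𝕜 hp⟩⟩
  have hms : MidSummable 𝕜 p (fun k => a k • x) :=
    ⟨A ^ (1/p) * ‖x‖, fun φ h1 h2 => perPhi' 𝕜 hp a ha x φ h1 h2⟩
  refine ⟨hms, ?_⟩
  have hub : midNorm 𝕜 p (fun k => a k • x) ≤ A ^ (1/p) * ‖x‖ :=
    ciSup_le fun φ => (perPhi' 𝕜 hp a ha x φ.1 φ.2.1 φ.2.2).2.2
  rcases eq_or_ne x 0 with rfl | hx
  · have hlb : 0 ≤ midNorm 𝕜 p (fun k => a k • (0:E)) := by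
      refine le_ciSup_of_le ?_ hne.some ?_
      · refine ⟨A ^ (1/p) * ‖(0:E)‖, ?_⟩
        rintro r ⟨φ, rfl⟩
        exact (perPhi' 𝕜 hp a ha 0 φ.1 φ.2.1 φ.2.2).2.2
      · exact Real.rpow_nonneg (tsum_nonneg fun n => tsum_nonneg fun j =>
          Real.rpow_nonneg (norm_nonneg _) p) _
    simp only [norm_zero, mul_zero] at hub ⊢
    linarith
  · -- lower bound via a norming functional
    obtain ⟨ψ, hψn, hψx⟩ := exists_dual_vector 𝕜 x (norm_ne_zero_iff.2 hx)
    set φ : ℕ → StrongDual 𝕜 E := fun n => if n = 0 then ψ else 0 with hφ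
    have hφval : ∀ (y : E) n, ‖φ n y‖ ^ p = (if n = 0 then ‖ψ y‖ ^ p else 0) := by
      intro y n
      by_cases h : n = 0 <;> simp [hφ, h, Real.zero_rpow hpne]
    have hφsum : ∀ y : E, Summable (fun n => ‖φ n y‖ ^ p) ∧
        ∑' n, ‖φ n y‖ ^ p = ‖ψ y‖ ^ p := by
      intro y
      have h := hasSum_ite_eq (0 : ℕ) (‖ψ y‖ ^ p)
      have heq : (fun n => ‖φ n y‖ ^ p) = fun n => if n = 0 then ‖ψ y‖ ^ p else 0 :=
        funext fun n => hφval y n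
      rw [heq]
      exact ⟨h.summable, h.tsum_eq⟩
    have hgood1 : DualWeaklySummable 𝕜 p φ := by
      refine ⟨1, fun y hy => ⟨(hφsum y).1, ?_⟩⟩
      rw [(hφsum y).2, ← Real.rpow_mul (norm_nonneg _), mul_one_div, div_self hpne,
        Real.rpow_one]
      calc ‖ψ y‖ ≤ ‖ψ‖ * ‖y‖ := ψ.le_opNorm y
        _ ≤ 1 * 1 := by rw [hψn]; exact mul_le_mul_of_nonneg_left hy zero_le_one
        _ = 1 := one_mul 1
    have hgood2 : dualWeakNorm 𝕜 p φ ≤ 1 := by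
      haveI : Nonempty {y : E // ‖y‖ ≤ 1} := ⟨⟨0, by simp⟩⟩
      refine ciSup_le fun y => ?_
      rw [(hφsum y.1).2, ← Real.rpow_mul (norm_nonneg _), mul_one_div, div_self hpne,
        Real.rpow_one]
      calc ‖ψ y.1‖ ≤ ‖ψ‖ * ‖y.1‖ := ψ.le_opNorm y.1
        _ ≤ 1 * 1 := by rw [hψn]; exact mul_le_mul_of_nonneg_left y.2 zero_le_one
        _ = 1 := one_mul 1
    have hψxn : ‖ψ x‖ = ‖x‖ := by
      rw [hψx, RCLike.norm_ofReal, abs_of_nonneg (norm_nonneg x)]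
    have hval : (∑' n, ∑' j, ‖φ n (a j • x)‖ ^ p) ^ (1 / p) = A ^ (1/p) * ‖x‖ := by
      have hinner : ∀ n, ∑' j, ‖φ n (a j • x)‖ ^ p =
          (if n = 0 then A * ‖x‖ ^ p else 0) := by
        intro n
        by_cases h : n = 0
        · simp only [h, if_true]
          have : ∀ j, ‖φ 0 (a j • x)‖ ^ p = ‖a j‖ ^ p * ‖x‖ ^ p := by
            intro j
            rw [hφ]
            simp only [if_true]
            rw [map_smul, norm_smul, Real.mul_rpow (norm_nonneg _) (norm_nonneg _), hψxn]
          rw [hA, ← tsum_mul_right]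
          exact tsum_congr this
        · simp only [h, if_false]
          have : ∀ j, ‖φ n (a j • x)‖ ^ p = 0 := by
            intro j
            rw [hφ]; simp [h, Real.zero_rpow hpne]
          rw [tsum_congr this, tsum_zero]
      have houter : ∑' n, ∑' j, ‖φ n (a j • x)‖ ^ p = A * ‖x‖ ^ p := by
        rw [tsum_congr hinner, (hasSum_ite_eq (0:ℕ) (A * ‖x‖ ^ p)).tsum_eq]
      rw [houter, Real.mul_rpow hA0 (Real.rpow_nonneg (norm_nonneg x) p),
        ← Real.rpow_mul (norm_nonneg x), mul_one_div, div_self hpne, Real.rpow_one]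
    have hlb : A ^ (1/p) * ‖x‖ ≤ midNorm 𝕜 p (fun k => a k • x) := by
      rw [← hval]
      refine le_ciSup (f := fun φ : {φ : ℕ → StrongDual 𝕜 E //
          DualWeaklySummable 𝕜 p φ ∧ dualWeakNorm 𝕜 p φ ≤ 1} =>
          (∑' n, ∑' j, ‖φ.1 n (a j • x)‖ ^ p) ^ (1 / p)) ?_ ⟨φ, hgood1, hgood2⟩
      refine ⟨A ^ (1/p) * ‖x‖, ?_⟩
      rintro r ⟨χ, rfl⟩
      exact (perPhi' 𝕜 hp a ha x χ.1 χ.2.1 χ.2.2).2.2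
    exact le_antisymm hub hlb

end Aux

/-- For `(a_k) ∈ ℓ_p` and `x ∈ E`, the sequence `(a_k x)_k` is mid
`p`-summable with `‖(a_k x)‖_{p,mid} = ‖(a_k)‖_p ‖x‖`, and its tails tend to `0` in the
mid norm, so `(a_k x)_k ∈ (ℓ_p^{mid})^u(E)`. -/
theorem scalar_times_vector_mem_midu
    (𝕜 : Type) [RCLike 𝕜] (p : ℝ) (hp : 1 ≤ p)
    (E : Type) [NormedAddCommGroup E] [NormedSpace 𝕜 E] [CompleteSpace E]
    (a : ℕ → 𝕜) (ha : Summable fun k => ‖a k‖ ^ p) (x : E) :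
    MidSummable 𝕜 p (fun k => a k • x) ∧
    midNorm 𝕜 p (fun k => a k • x) = (∑' k, ‖a k‖ ^ p) ^ (1 / p) * ‖x‖ ∧
    Filter.Tendsto (fun n => midNorm 𝕜 p (fun k => a (k + n) • x))
      Filter.atTop (nhds 0) := by
  have hp0 : (0:ℝ) < p := lt_of_lt_of_le zero_lt_one hp
  obtain ⟨hms, heq⟩ := mid_eq' 𝕜 hp a ha x
  refine ⟨hms, heq, ?_⟩
  have heqn : ∀ n, midNorm 𝕜 p (fun k => a (k + n) • x) =
      (∑' k, ‖a (k + n)‖ ^ p) ^ (1 / p) * ‖x‖ := fun n =>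
    (mid_eq' 𝕜 hp (fun k => a (k + n)) ((summable_nat_add_iff n).mpr ha) x).2
  simp only [heqn]
  have h1 : Filter.Tendsto (fun n => ∑' k, ‖a (k + n)‖ ^ p) Filter.atTop (nhds 0) :=
    tendsto_sum_nat_add (fun m => ‖a m‖ ^ p)
  have h2 : Filter.Tendsto (fun n => (∑' k, ‖a (k + n)‖ ^ p) ^ (1 / p))
      Filter.atTop (nhds 0) := by
    have := (Real.continuousAt_rpow_const 0 (1 / p)
      (Or.inr (by positivity))).tendsto.comp h1
    simpa [Function.comp_def, one_div, Real.zero_rpow (inv_ne_zero hp0.ne')] using this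
  simpa using h2.mul_const ‖x‖
end

section
/- Characterization of mid p-summability: a sequence (x_j) in a Banach space E belongs to ℓ_p^{mid}(E) if and only if for every weakly p-summable sequence (φ_n) in E', the double-indexed family ((φ_n(x_j))_n)_j belongs to ℓ_p(ℓ_p), i.e., Σ_j Σ_n |φ_n(x_j)|^p < ∞. -/
open Filter Topology NormedSpace
open scoped TensorProduct ENNReal

lemma mySummable_iff_ofReal {ι : Type*} {f : ι → ℝ} (hf : ∀ i, 0 ≤ f i) :
    Summable f ↔ (∑' i, ENNReal.ofReal (f i)) ≠ ⊤ := by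
  have hfe : (fun i => ((f i).toNNReal : ℝ)) = f := funext fun i => Real.coe_toNNReal _ (hf i)
  rw [← hfe, NNReal.summable_coe, ← ENNReal.tsum_coe_ne_top_iff_summable]
  simp only [ENNReal.ofReal, Real.toNNReal_coe]

lemma mytsum_eq_toReal {ι : Type*} {f : ι → ℝ} (hf : ∀ i, 0 ≤ f i) :
    ∑' i, f i = (∑' i, ENNReal.ofReal (f i)).toReal := by
  rw [ENNReal.tsum_toReal_eq (fun i => ENNReal.ofReal_ne_top)]
  exact tsum_congr fun i => (ENNReal.toReal_ofReal (hf i)).symm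

lemma mydouble_iff {ι κ : Type*} {f : ι → κ → ℝ} (hf : ∀ n j, 0 ≤ f n j) :
    ((∀ n, Summable (f n)) ∧ Summable (fun n => ∑' j, f n j)) ↔
      (∑' n, ∑' j, ENNReal.ofReal (f n j)) ≠ ⊤ := by
  constructor
  · rintro ⟨h1, h2⟩
    have : ∀ n, ∑' j, ENNReal.ofReal (f n j) = ENNReal.ofReal (∑' j, f n j) :=
      fun n => (ENNReal.ofReal_tsum_of_nonneg (hf n) (h1 n)).symm
    rw [tsum_congr this]
    exact (mySummable_iff_ofReal (fun n => tsum_nonneg (fun j => hf n j))).mp h2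
  · intro h
    have hin : ∀ n, (∑' j, ENNReal.ofReal (f n j)) ≠ ⊤ :=
      fun n => ne_top_of_le_ne_top h (ENNReal.le_tsum n)
    have h1 : ∀ n, Summable (f n) := fun n => (mySummable_iff_ofReal (hf n)).mpr (hin n)
    refine ⟨h1, ?_⟩
    rw [mySummable_iff_ofReal (fun n => tsum_nonneg (fun j => hf n j))]
    have : ∀ n, ENNReal.ofReal (∑' j, f n j) = ∑' j, ENNReal.ofReal (f n j) := by
      intro n
      rw [mytsum_eq_toReal (hf n), ENNReal.ofReal_toReal (hin n)]
    rw [tsum_congr this]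
    exact h

lemma mydouble_tsum_eq {ι κ : Type*} {f : ι → κ → ℝ} (hf : ∀ n j, 0 ≤ f n j)
    (h : (∑' n, ∑' j, ENNReal.ofReal (f n j)) ≠ ⊤) :
    ∑' n, ∑' j, f n j = (∑' n, ∑' j, ENNReal.ofReal (f n j)).toReal := by
  have hin : ∀ n, (∑' j, ENNReal.ofReal (f n j)) ≠ ⊤ :=
    fun n => ne_top_of_le_ne_top h (ENNReal.le_tsum n)
  rw [ENNReal.tsum_toReal_eq hin]
  exact tsum_congr fun n => by rw [mytsum_eq_toReal (hf n)]

section aux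

variable {𝕜 : Type} [RCLike 𝕜] {p : ℝ} {E : Type} [NormedAddCommGroup E] [NormedSpace 𝕜 E]

lemma mySmul_norm_rpow {c : ℝ} (hc : 0 < c) (φ : StrongDual 𝕜 E) (y : E) :
    ‖(((c : 𝕜) • φ) y)‖ ^ p = c ^ p * ‖φ y‖ ^ p := by
  have : ‖(((c : 𝕜) • φ) y)‖ = c * ‖φ y‖ := by
    rw [ContinuousLinearMap.smul_apply, norm_smul, RCLike.norm_ofReal, abs_of_pos hc]
  rw [this, Real.mul_rpow hc.le (norm_nonneg _)]

lemma myDual_sum_le (hp : 0 < p) {φ : ℕ → StrongDual 𝕜 E}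
    (h1 : DualWeaklySummable 𝕜 p φ) (h2 : dualWeakNorm 𝕜 p φ ≤ 1)
    {y : E} (hy : ‖y‖ ≤ 1) :
    Summable (fun n => ‖φ n y‖ ^ p) ∧ ∑' n, ‖φ n y‖ ^ p ≤ 1 := by
  obtain ⟨C, hC⟩ := h1
  refine ⟨(hC y hy).1, ?_⟩
  have hb : BddAbove (Set.range fun z : {z : E // ‖z‖ ≤ 1} =>
      (∑' n, ‖φ n z.1‖ ^ p) ^ (1 / p)) := by
    refine ⟨C, ?_⟩; rintro _ ⟨z, rfl⟩; exact (hC z.1 z.2).2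
  have hle : (∑' n, ‖φ n y‖ ^ p) ^ (1 / p) ≤ dualWeakNorm 𝕜 p φ :=
    le_ciSup hb (⟨y, hy⟩ : {z : E // ‖z‖ ≤ 1})
  have h3 : (∑' n, ‖φ n y‖ ^ p) ^ (1 / p) ≤ 1 := hle.trans h2
  have hs : 0 ≤ ∑' n, ‖φ n y‖ ^ p := tsum_nonneg fun n => Real.rpow_nonneg (norm_nonneg _) p
  have h4 : ((∑' n, ‖φ n y‖ ^ p) ^ (1 / p)) ^ p ≤ (1 : ℝ) ^ p :=
    Real.rpow_le_rpow (Real.rpow_nonneg hs _) h3 hp.le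
  rwa [← Real.rpow_mul hs, one_div, inv_mul_cancel₀ hp.ne', Real.rpow_one, Real.one_rpow] at h4

end aux

/-- A sequence `(x_j)` in `E` is mid `p`-summable iff for every weakly
`p`-summable sequence `(φ_n)` in `E'` one has `Σ_j Σ_n |φ_n(x_j)|^p < ∞`. -/
theorem midSummable_iff_double_summable
    (𝕜 : Type) [RCLike 𝕜] (p : ℝ) (hp : 1 ≤ p)
    (E : Type) [NormedAddCommGroup E] [NormedSpace 𝕜 E] [CompleteSpace E]
    (x : ℕ → E) :
    MidSummable 𝕜 p x ↔
      ∀ φ : ℕ → StrongDual 𝕜 E, DualWeaklySummable 𝕜 p φ →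
        (∀ j, Summable fun n => ‖φ n (x j)‖ ^ p) ∧
        Summable (fun j => ∑' n, ‖φ n (x j)‖ ^ p) := by
  have hp0 : (0 : ℝ) < p := lt_of_lt_of_le one_pos hp
  have hnn : ∀ (φ : ℕ → StrongDual 𝕜 E) (n j : ℕ), (0:ℝ) ≤ ‖φ n (x j)‖ ^ p :=
    fun φ n j => Real.rpow_nonneg (norm_nonneg _) p
  haveI : Nonempty {z : E // ‖z‖ ≤ 1} := ⟨⟨0, by simp⟩⟩
  constructor
  · rintro ⟨C, hC⟩ φ hφ
    obtain ⟨D, hD⟩ := hφ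
    set c : ℝ := max D 1 with hcdef
    have hc1 : (1:ℝ) ≤ c := le_max_right _ _
    have hc0 : (0:ℝ) < c := lt_of_lt_of_le one_pos hc1
    have hic0 : (0:ℝ) < c⁻¹ := inv_pos.mpr hc0
    set ψ : ℕ → StrongDual 𝕜 E := fun n => ((c⁻¹ : ℝ) : 𝕜) • φ n with hψdef
    have key : ∀ n (y : E), ‖ψ n y‖ ^ p = c⁻¹ ^ p * ‖φ n y‖ ^ p :=
      fun n y => mySmul_norm_rpow hic0 (φ n) y
    have hψw : ∀ y : E, ‖y‖ ≤ 1 →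
        Summable (fun n => ‖ψ n y‖ ^ p) ∧ (∑' n, ‖ψ n y‖ ^ p) ^ (1/p) ≤ 1 := by
      intro y hy
      obtain ⟨hs, hb⟩ := hD y hy
      have hsum : Summable (fun n => ‖ψ n y‖ ^ p) := by
        simp only [key]; exact hs.mul_left _
      refine ⟨hsum, ?_⟩
      have ht : ∑' n, ‖ψ n y‖ ^ p = c⁻¹ ^ p * ∑' n, ‖φ n y‖ ^ p := by
        simp only [key]; exact tsum_mul_left
      have hφnn : (0:ℝ) ≤ ∑' n, ‖φ n y‖ ^ p :=
        tsum_nonneg fun n => Real.rpow_nonneg (norm_nonneg _) p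
      rw [ht, Real.mul_rpow (Real.rpow_nonneg hic0.le p) hφnn, ← Real.rpow_mul hic0.le,
        mul_one_div_cancel hp0.ne', Real.rpow_one]
      calc c⁻¹ * (∑' n, ‖φ n y‖ ^ p) ^ (1/p) ≤ c⁻¹ * c :=
            mul_le_mul_of_nonneg_left (hb.trans (le_max_left D 1)) hic0.le
        _ = 1 := inv_mul_cancel₀ hc0.ne'
    have hψDWS : DualWeaklySummable 𝕜 p ψ := ⟨1, fun y hy => hψw y hy⟩
    have hψnorm : dualWeakNorm 𝕜 p ψ ≤ 1 := ciSup_le fun z => (hψw z.1 z.2).2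
    obtain ⟨h1, h2, -⟩ := hC ψ hψDWS hψnorm
    have hSψ : (∑' n, ∑' j, ENNReal.ofReal (‖ψ n (x j)‖ ^ p)) ≠ ⊤ :=
      (mydouble_iff (fun n j => Real.rpow_nonneg (norm_nonneg _) p)).mp ⟨h1, h2⟩
    have hkey2 : ∀ n j, ENNReal.ofReal (‖φ n (x j)‖ ^ p) =
        ENNReal.ofReal (c ^ p) * ENNReal.ofReal (‖ψ n (x j)‖ ^ p) := by
      intro n j
      rw [← ENNReal.ofReal_mul (Real.rpow_nonneg hc0.le p)]
      congr 1
      rw [key, ← mul_assoc, ← Real.mul_rpow hc0.le hic0.le, mul_inv_cancel₀ hc0.ne',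
        Real.one_rpow, one_mul]
    have hSφ : (∑' n, ∑' j, ENNReal.ofReal (‖φ n (x j)‖ ^ p)) ≠ ⊤ := by
      have : (∑' n, ∑' j, ENNReal.ofReal (‖φ n (x j)‖ ^ p)) =
          ENNReal.ofReal (c ^ p) * ∑' n, ∑' j, ENNReal.ofReal (‖ψ n (x j)‖ ^ p) := by
        simp only [hkey2, ENNReal.tsum_mul_left]
      rw [this]
      exact ENNReal.mul_ne_top ENNReal.ofReal_ne_top hSψ
    have hswap : (∑' j, ∑' n, ENNReal.ofReal (‖φ n (x j)‖ ^ p)) ≠ ⊤ := by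
      rw [ENNReal.tsum_comm]; exact hSφ
    exact (mydouble_iff (fun j n => hnn φ n j)).mpr hswap
  · intro H
    -- each weakly summable φ has finite double sum
    have hfin : ∀ φ : ℕ → StrongDual 𝕜 E, DualWeaklySummable 𝕜 p φ →
        (∑' n, ∑' j, ENNReal.ofReal (‖φ n (x j)‖ ^ p)) ≠ ⊤ := by
      intro φ hφ
      have := (mydouble_iff (fun j n => hnn φ n j)).mp (H φ hφ)
      rw [ENNReal.tsum_comm]; exact this
    -- uniform bound
    have hBdd : ∃ M : ℝ≥0∞, M ≠ ⊤ ∧ ∀ φ : ℕ → StrongDual 𝕜 E,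
        DualWeaklySummable 𝕜 p φ → dualWeakNorm 𝕜 p φ ≤ 1 →
        (∑' n, ∑' j, ENNReal.ofReal (‖φ n (x j)‖ ^ p)) ≤ M := by
      by_contra hM
      push_neg at hM
      have hchoice : ∀ k : ℕ, ∃ φ : ℕ → StrongDual 𝕜 E,
          DualWeaklySummable 𝕜 p φ ∧ dualWeakNorm 𝕜 p φ ≤ 1 ∧
          (2:ℝ≥0∞) ^ ((k:ℝ) * p) < ∑' n, ∑' j, ENNReal.ofReal (‖φ n (x j)‖ ^ p) := by
        intro k
        obtain ⟨φ, hφ1, hφ2, hφ3⟩ := hM ((2:ℝ≥0∞) ^ ((k:ℝ) * p))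
          (ENNReal.rpow_ne_top_of_nonneg (by positivity) (by norm_num))
        exact ⟨φ, hφ1, hφ2, hφ3⟩
      choose Φ hΦ1 hΦ2 hΦ3 using hchoice
      -- glue into a single weakly summable sequence
      set e : ℕ ≃ ℕ × ℕ := (Denumerable.eqv (ℕ × ℕ)).symm with hedef
      set c : ℕ → ℝ := fun k => (2:ℝ) ^ (-(k:ℝ)) with hcdef
      have hck : ∀ k, (0:ℝ) < c k := fun k => Real.rpow_pos_of_pos two_pos _
      set ψ : ℕ → StrongDual 𝕜 E :=
        fun m => ((c (e m).1 : ℝ) : 𝕜) • Φ (e m).1 (e m).2 with hψdef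
      have key : ∀ m (y : E), ‖ψ m y‖ ^ p = c (e m).1 ^ p * ‖Φ (e m).1 (e m).2 y‖ ^ p :=
        fun m y => mySmul_norm_rpow (hck _) _ y
      -- bound on the coefficients
      have hcof : ∀ k : ℕ, ENNReal.ofReal (c k ^ p) = (2:ℝ≥0∞) ^ (-(k:ℝ) * p) := by
        intro k
        rw [hcdef]
        rw [← Real.rpow_mul (by norm_num : (0:ℝ) ≤ 2)]
        rw [← ENNReal.ofReal_rpow_of_pos two_pos, ENNReal.ofReal_ofNat]
      have hcle : ∀ k : ℕ, ENNReal.ofReal (c k ^ p) ≤ (2:ℝ≥0∞)⁻¹ ^ k := by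
        intro k
        rw [hcof]
        have h1 : (2:ℝ≥0∞) ^ (-(k:ℝ) * p) ≤ (2:ℝ≥0∞) ^ (-(k:ℝ)) := by
          apply ENNReal.rpow_le_rpow_of_exponent_le (by norm_num)
          nlinarith [Nat.cast_nonneg (α := ℝ) k]
        refine h1.trans_eq ?_
        rw [ENNReal.rpow_neg, ENNReal.rpow_natCast, ENNReal.inv_pow]
      -- ψ is weakly p-summable
      have hψDWS : DualWeaklySummable 𝕜 p ψ := by
        refine ⟨2, fun y hy => ?_⟩
        have hT : (∑' m, ENNReal.ofReal (‖ψ m y‖ ^ p)) ≤ 2 := by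
          have h1 : (∑' m, ENNReal.ofReal (‖ψ m y‖ ^ p)) =
              ∑' (pr : ℕ × ℕ), ENNReal.ofReal (c pr.1 ^ p * ‖Φ pr.1 pr.2 y‖ ^ p) := by
            rw [← e.tsum_eq]
            exact tsum_congr fun m => by rw [key]
          rw [h1, ENNReal.tsum_prod']
          have h2 : ∀ k : ℕ, (∑' n, ENNReal.ofReal (c k ^ p * ‖Φ k n y‖ ^ p)) ≤
              (2:ℝ≥0∞)⁻¹ ^ k := by
            intro k
            have h3 : ∀ n, ENNReal.ofReal (c k ^ p * ‖Φ k n y‖ ^ p) =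
                ENNReal.ofReal (c k ^ p) * ENNReal.ofReal (‖Φ k n y‖ ^ p) :=
              fun n => ENNReal.ofReal_mul (Real.rpow_nonneg (hck k).le p)
            rw [tsum_congr h3, ENNReal.tsum_mul_left]
            obtain ⟨hsum, hle1⟩ := myDual_sum_le hp0 (hΦ1 k) (hΦ2 k) hy
            have h4 : (∑' n, ENNReal.ofReal (‖Φ k n y‖ ^ p)) ≤ 1 := by
              rw [← ENNReal.ofReal_tsum_of_nonneg
                (fun n => Real.rpow_nonneg (norm_nonneg _) p) hsum]
              exact ENNReal.ofReal_le_one.mpr hle1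
            calc ENNReal.ofReal (c k ^ p) * ∑' n, ENNReal.ofReal (‖Φ k n y‖ ^ p)
                ≤ (2:ℝ≥0∞)⁻¹ ^ k * 1 := mul_le_mul' (hcle k) h4
              _ = (2:ℝ≥0∞)⁻¹ ^ k := mul_one _
          calc (∑' k, ∑' n, ENNReal.ofReal (c k ^ p * ‖Φ k n y‖ ^ p))
              ≤ ∑' k : ℕ, (2:ℝ≥0∞)⁻¹ ^ k := ENNReal.tsum_le_tsum h2
            _ = (1 - 2⁻¹)⁻¹ := ENNReal.tsum_geometric _
            _ = 2 := by rw [ENNReal.one_sub_inv_two, inv_inv]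
        have hTne : (∑' m, ENNReal.ofReal (‖ψ m y‖ ^ p)) ≠ ⊤ :=
          ne_top_of_le_ne_top (by norm_num) hT
        have hsum : Summable (fun m => ‖ψ m y‖ ^ p) :=
          (mySummable_iff_ofReal (fun m => Real.rpow_nonneg (norm_nonneg _) p)).mpr hTne
        refine ⟨hsum, ?_⟩
        have hre : ∑' m, ‖ψ m y‖ ^ p ≤ 2 := by
          rw [mytsum_eq_toReal (fun m => Real.rpow_nonneg (norm_nonneg _) p)]
          calc (∑' m, ENNReal.ofReal (‖ψ m y‖ ^ p)).toReal
              ≤ (2:ℝ≥0∞).toReal := ENNReal.toReal_mono (by norm_num) hT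
            _ = 2 := by norm_num
        have hsnn : (0:ℝ) ≤ ∑' m, ‖ψ m y‖ ^ p :=
          tsum_nonneg fun m => Real.rpow_nonneg (norm_nonneg _) p
        calc (∑' m, ‖ψ m y‖ ^ p) ^ (1/p) ≤ (2:ℝ) ^ (1/p) :=
              Real.rpow_le_rpow hsnn hre (by positivity)
          _ ≤ (2:ℝ) ^ (1:ℝ) := by
              apply Real.rpow_le_rpow_of_exponent_le (by norm_num)
              rw [div_le_one hp0]; exact hp
          _ = 2 := Real.rpow_one 2
      -- contradiction: the double sum for ψ is infinite
      have hVfin := hfin ψ hψDWS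
      have hVtop : (∑' m, ∑' j, ENNReal.ofReal (‖ψ m (x j)‖ ^ p)) = ⊤ := by
        have h1 : (∑' m, ∑' j, ENNReal.ofReal (‖ψ m (x j)‖ ^ p)) =
            ∑' (pr : ℕ × ℕ), ∑' j, ENNReal.ofReal (c pr.1 ^ p * ‖Φ pr.1 pr.2 (x j)‖ ^ p) := by
          rw [← e.tsum_eq]
          exact tsum_congr fun m => tsum_congr fun j => by rw [key]
        rw [h1, ENNReal.tsum_prod']
        have h2 : ∀ k : ℕ, (1:ℝ≥0∞) ≤
            ∑' n, ∑' j, ENNReal.ofReal (c k ^ p * ‖Φ k n (x j)‖ ^ p) := by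
          intro k
          have h3 : (∑' n, ∑' j, ENNReal.ofReal (c k ^ p * ‖Φ k n (x j)‖ ^ p)) =
              ENNReal.ofReal (c k ^ p) * ∑' n, ∑' j, ENNReal.ofReal (‖Φ k n (x j)‖ ^ p) := by
            simp only [fun n j => ENNReal.ofReal_mul
              (p := c k ^ p) (q := ‖Φ k n (x j)‖ ^ p) (Real.rpow_nonneg (hck k).le p),
              ENNReal.tsum_mul_left]
          rw [h3, hcof]
          calc (1:ℝ≥0∞) = (2:ℝ≥0∞) ^ (-(k:ℝ) * p) * (2:ℝ≥0∞) ^ ((k:ℝ) * p) := by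
                rw [← ENNReal.rpow_add _ _ (by norm_num) (by norm_num)]
                norm_num
            _ ≤ (2:ℝ≥0∞) ^ (-(k:ℝ) * p) *
                ∑' n, ∑' j, ENNReal.ofReal (‖Φ k n (x j)‖ ^ p) :=
                mul_le_mul' le_rfl (hΦ3 k).le
        refine top_le_iff.mp ?_
        calc (⊤ : ℝ≥0∞) = ∑' _ : ℕ, (1:ℝ≥0∞) :=
              (ENNReal.tsum_const_eq_top_of_ne_zero one_ne_zero).symm
          _ ≤ _ := ENNReal.tsum_le_tsum h2
      exact hVfin hVtop
    obtain ⟨M, hMne, hMle⟩ := hBdd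
    refine ⟨M.toReal ^ (1/p), fun φ hφ1 hφ2 => ?_⟩
    have hS := hMle φ hφ1 hφ2
    have hSne : (∑' n, ∑' j, ENNReal.ofReal (‖φ n (x j)‖ ^ p)) ≠ ⊤ :=
      ne_top_of_le_ne_top hMne hS
    obtain ⟨h1, h2⟩ := (mydouble_iff (fun n j => hnn φ n j)).mpr hSne
    refine ⟨h1, h2, ?_⟩
    rw [mydouble_tsum_eq (fun n j => hnn φ n j) hSne]
    exact Real.rpow_le_rpow ENNReal.toReal_nonneg (ENNReal.toReal_mono hMne hS)
      (by positivity)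
end
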